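/- arXiv:1502.05953 — 8 statements merged into one kernel-verified Lean document; each statement's English description precedes it below -/
import Mathlib

section
/- Let K be a field, and let b₁(x), b₂(x) ∈ K[x] be nonconstant polynomials, and let l, m be positive integers. Then y^l - b₁(x) divides y^m - b₂(x) in K[x,y] if and only if l divides m and b₂(x) = b₁(x)^(m/l). -/
open Polynomial

theorem stmt_0 {K : Type*} [Field K] (b₁ b₂ : Polynomial K)
    (h₁ : 0 < b₁.natDegree) (h₂ : 0 < b₂.natDegree)
    (l m : ℕ) (hl : 0 < l) (hm : 0 < m) :
    ((X : Polynomial (Polynomial K)) ^ l - C b₁ ∣ X ^ m - C b₂) ↔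
      l ∣ m ∧ b₂ = b₁ ^ (m / l) := by
  have hb₁ : b₁ ≠ 0 := fun h => by simp [h] at h₁
  have hb₂ : b₂ ≠ 0 := fun h => by simp [h] at h₂
  constructor
  · intro hdvd
    set q := m / l with hq
    set r := m % l with hr
    have hm' : l * q + r = m := Nat.div_add_mod m l
    have hx : (X : Polynomial (Polynomial K)) ^ m = (X ^ l) ^ q * X ^ r := by
      rw [← pow_mul, ← pow_add, hm']
    have key : (X : Polynomial (Polynomial K)) ^ l - C b₁ ∣
        X ^ m - C (b₁ ^ q) * X ^ r := by
      rw [hx, map_pow, ← sub_mul]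
      exact (sub_dvd_pow_sub_pow _ _ q).mul_right _
    have hdvd2 : (X : Polynomial (Polynomial K)) ^ l - C b₁ ∣
        C b₂ - C (b₁ ^ q) * X ^ r := by
      have := dvd_sub key hdvd
      simpa using this
    have hrlt : r < l := Nat.mod_lt m hl
    have hdeg : (C b₂ - C (b₁ ^ q) * X ^ r).degree <
        ((X : Polynomial (Polynomial K)) ^ l - C b₁).degree := by
      rw [degree_X_pow_sub_C hl]
      apply lt_of_le_of_lt (degree_sub_le _ _)
      rw [max_lt_iff]
      constructor
      · exact lt_of_le_of_lt degree_C_le (by exact_mod_cast hl)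
      · apply lt_of_le_of_lt (degree_mul_le _ _)
        calc (C (b₁ ^ q)).degree + (X ^ r : Polynomial (Polynomial K)).degree
            ≤ 0 + r := add_le_add degree_C_le (degree_X_pow_le r)
          _ = (r : WithBot ℕ) := zero_add _
          _ < l := by exact_mod_cast hrlt
    have hz : C b₂ - C (b₁ ^ q) * X ^ r = 0 :=
      eq_zero_of_dvd_of_degree_lt hdvd2 hdeg
    have hz' : C b₂ = C (b₁ ^ q) * X ^ r := by linear_combination (norm := ring_nf) hz
    have hr0 : r = 0 := by
      by_contra hrne
      have hc := congrArg (fun p => Polynomial.coeff p r) hz'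
      simp [coeff_C, hrne, ← map_pow, coeff_C_mul, coeff_X_pow] at hc
      exact pow_ne_zero q hb₁ hc.symm
    refine ⟨Nat.dvd_of_mod_eq_zero hr0, ?_⟩
    rw [hr0, pow_zero, mul_one] at hz'
    exact C_injective hz'
  · rintro ⟨⟨k, rfl⟩, hb⟩
    have hk : l * k / l = k := Nat.mul_div_cancel_left k hl
    rw [hb, hk, pow_mul, map_pow]
    exact sub_dvd_pow_sub_pow _ _ k
end

section
/- Let p > 2 be prime, q = p^h, and n a positive integer with n > 3. If n divides n + 3(q-1) and (1/b - (a/b)x^n)^{3(q-1)/n + 1} = 1/b - (a/b)x^{n+3(q-1)} holds in 𝔽_q[x] for some a, b ∈ 𝔽_q with ab ≠ 0, then 3(q-1)/n + 1 = p^r for some positive integer r, and a, b ∈ 𝔽_{p^r}. -/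
open Polynomial

lemma aux_pow_of_dvd_choose {p : ℕ} (hp : p.Prime) {m : ℕ} (hm : 2 ≤ m)
    (H : ∀ k, 0 < k → k < m → p ∣ m.choose k) : ∃ r, 0 < r ∧ m = p ^ r := by
  haveI : Fact p.Prime := ⟨hp⟩
  set t := Nat.log p m with ht
  have hpt : p ^ t ≤ m := Nat.pow_log_le_self p (by omega)
  have hlt : m < p ^ (t + 1) := Nat.lt_pow_succ_log_self hp.one_lt m
  have hmeq : m = p ^ t := by
    by_contra hne
    have hptm : p ^ t < m := lt_of_le_of_ne hpt (Ne.symm hne)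
    have hdvd : p ∣ m.choose (p ^ t) := H _ (pow_pos hp.pos t) hptm
    have hmod := Choose.choose_modEq_prod_range_choose_nat (p := p) (n := m) (k := p ^ t)
      hlt (lt_of_le_of_lt hpt hlt)
    have hprod : (∏ i ∈ Finset.range (t + 1), Nat.choose (m / p ^ i % p) (p ^ t / p ^ i % p))
        = m / p ^ t % p := by
      rw [Finset.prod_range_succ]
      have h1 : ∀ i ∈ Finset.range t, Nat.choose (m / p ^ i % p) (p ^ t / p ^ i % p) = 1 := by
        intro i hi
        rw [Finset.mem_range] at hi
        have : p ^ t / p ^ i = p ^ (t - i) := by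
          rw [Nat.pow_div (by omega) hp.pos]
        rw [this, Nat.mod_eq_zero_of_dvd (dvd_pow_self p (by omega)), Nat.choose_zero_right]
      rw [Finset.prod_congr rfl h1, Finset.prod_const_one, one_mul,
        Nat.div_self (pow_pos hp.pos t), Nat.one_mod_eq_one.mpr hp.one_lt.ne',
        Nat.choose_one_right]
    rw [hprod] at hmod
    have hq1 : 1 ≤ m / p ^ t := Nat.one_le_div_iff (pow_pos hp.pos t) |>.mpr hpt
    have hq2 : m / p ^ t < p := by
      rw [Nat.div_lt_iff_lt_mul (pow_pos hp.pos t)]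
      calc m < p ^ (t + 1) := hlt
        _ = p * p ^ t := by ring
    have hmodp : m / p ^ t % p = m / p ^ t := Nat.mod_eq_of_lt hq2
    rw [hmodp] at hmod
    have : p ∣ m / p ^ t := (Nat.modEq_zero_iff_dvd).mp ((Nat.modEq_zero_iff_dvd.mpr hdvd).symm.trans hmod).symm
    omega
  refine ⟨t, ?_, hmeq⟩
  rcases Nat.eq_zero_or_pos t with h0 | h0
  · rw [h0, pow_zero] at hmeq; omega
  · exact h0

lemma aux_coeff {F : Type*} [Field F] (u w : F) (n m k : ℕ) (hn : 0 < n) (hk : k ≤ m) :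
    ((C u + C w * X ^ n : Polynomial F) ^ m).coeff (n * k)
      = m.choose k * u ^ (m - k) * w ^ k := by
  rw [add_pow, finset_sum_coeff]
  have hterm : ∀ j, ((C u : Polynomial F) ^ j * (C w * X ^ n) ^ (m - j)
      * ((m.choose j : ℕ) : Polynomial F)).coeff (n * k)
      = if n * k = n * (m - j) then u ^ j * w ^ (m - j) * (m.choose j : F) else 0 := by
    intro j
    rw [mul_pow, ← pow_mul, ← C_pow, ← C_pow, coeff_mul_natCast, ← mul_assoc, ← C_mul,
      coeff_C_mul, coeff_X_pow]
    by_cases hc2 : n * k = n * (m - j)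
    · rw [if_pos hc2, if_pos hc2, mul_one]
    · rw [if_neg hc2, if_neg hc2, mul_zero, zero_mul]
  rw [Finset.sum_congr rfl (fun j _ => hterm j)]
  rw [Finset.sum_eq_single (m - k)]
  · rw [show m - (m - k) = k from by omega, if_pos rfl, Nat.choose_symm hk]
    ring
  · intro j hj hne
    rw [Finset.mem_range] at hj
    rw [if_neg]
    intro hcon
    have : k = m - j := Nat.eq_of_mul_eq_mul_left hn hcon
    omega
  · intro hcon
    exact absurd (Finset.mem_range.mpr (by omega)) hcon

theorem stmt_2 {p h : ℕ} (hp : p.Prime) (hp2 : 2 < p)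
    {F : Type*} [Field F] [Fintype F] (hF : Fintype.card F = p ^ h)
    (n : ℕ) (hn3 : 3 < n) (hdiv : n ∣ n + 3 * (p ^ h - 1))
    (a b : F) (hab : a * b ≠ 0)
    (heq : ((C (1 / b) - C (a / b) * X ^ n : Polynomial F)) ^ (3 * (p ^ h - 1) / n + 1) =
      C (1 / b) - C (a / b) * X ^ (n + 3 * (p ^ h - 1))) :
    ∃ r : ℕ, 0 < r ∧ 3 * (p ^ h - 1) / n + 1 = p ^ r ∧
      a ^ (p ^ r) = a ∧ b ^ (p ^ r) = b := by
  have ha : a ≠ 0 := fun h0 => hab (by rw [h0, zero_mul])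
  have hb : b ≠ 0 := fun h0 => hab (by rw [h0, mul_zero])
  have hq2 : 2 ≤ p ^ h := hF ▸ Fintype.one_lt_card
  have hn0 : 0 < n := by omega
  obtain ⟨d, hd⟩ : n ∣ 3 * (p ^ h - 1) := (Nat.dvd_add_right dvd_rfl).mp hdiv
  have hdq : 3 * (p ^ h - 1) / n = d := by rw [hd, Nat.mul_div_cancel_left _ hn0]
  have hd1 : 1 ≤ d := by
    rcases Nat.eq_zero_or_pos d with h0 | h0
    · rw [h0, mul_zero] at hd; omega
    · exact h0
  set m := 3 * (p ^ h - 1) / n + 1 with hm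
  have hmd : m = d + 1 := by rw [hm, hdq]
  set u := (1 : F) / b with hu
  set w := -(a / b) with hw
  have hnm : n + 3 * (p ^ h - 1) = n * m := by rw [hd, hmd]; ring
  have heq' : (C u + C w * X ^ n : Polynomial F) ^ m = C u + C w * X ^ (n * m) := by
    rw [hw]
    simp only [map_neg, neg_mul, ← sub_eq_add_neg]
    rw [← hnm]
    exact heq
  have hu0 : u ≠ 0 := by simp [hu, hb]
  have hw0 : w ≠ 0 := by simp [hw, ha, hb, _root_.div_eq_zero_iff]
  -- char p
  have hcharF : CharP F p := by
    have h1 : (ringChar F).Prime := CharP.char_is_prime F (ringChar F)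
    have h2 : ringChar F ∣ p ^ h := by
      rw [← hF]
      exact (CharP.cast_eq_zero_iff F (ringChar F) _).mp (FiniteField.cast_card_eq_zero F)
    have h3 : ringChar F = p := (Nat.prime_dvd_prime_iff_eq h1 hp).mp (h1.dvd_of_dvd_pow h2)
    exact h3 ▸ ringChar.charP F
  -- middle binomial coefficients vanish
  have hmid : ∀ k, 0 < k → k < m → p ∣ m.choose k := by
    intro k hk0 hkm
    have hc : ((C u + C w * X ^ n : Polynomial F) ^ m).coeff (n * k)
        = (C u + C w * X ^ (n * m) : Polynomial F).coeff (n * k) := by rw [heq']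
    rw [aux_coeff u w n m k hn0 (le_of_lt hkm)] at hc
    simp only [coeff_add, coeff_C, coeff_C_mul, coeff_X_pow] at hc
    rw [if_neg (by positivity), if_neg (by
      intro hcon
      exact absurd (Nat.eq_of_mul_eq_mul_left hn0 hcon) (by omega))] at hc
    simp only [mul_zero, add_zero] at hc
    have : (m.choose k : F) = 0 := by
      rcases mul_eq_zero.mp hc with h' | h'
      · rcases mul_eq_zero.mp h' with h'' | h''
        · exact h''
        · exact absurd h'' (pow_ne_zero _ hu0)
      · exact absurd h' (pow_ne_zero _ hw0)
    exact (CharP.cast_eq_zero_iff F p _).mp this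
  obtain ⟨r, hr0, hrm⟩ := aux_pow_of_dvd_choose hp (by omega) hmid
  -- constant coefficient : u ^ m = u
  have hm0 : 0 < m := by omega
  have hcu : u ^ m = u := by
    have hc := congrArg (eval 0) heq'
    simp only [eval_pow, eval_add, eval_mul, eval_C, eval_X,
      zero_pow hn0.ne', mul_zero, add_zero, zero_pow (Nat.mul_ne_zero hn0.ne' hm0.ne')] at hc
    exact hc
  -- leading coefficient : w ^ m = w
  have hcw : w ^ m = w := by
    have hc : ((C u + C w * X ^ n : Polynomial F) ^ m).coeff (n * m)
        = (C u + C w * X ^ (n * m) : Polynomial F).coeff (n * m) := by rw [heq']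
    rw [aux_coeff u w n m m hn0 le_rfl] at hc
    rw [coeff_add, coeff_C, if_neg (Nat.mul_ne_zero hn0.ne' hm0.ne'), coeff_C_mul,
      coeff_X_pow, if_pos rfl, mul_one, zero_add] at hc
    simpa using hc
  -- b ^ m = b
  have hbm : b ^ m = b := by
    have : (b⁻¹) ^ m = b⁻¹ := by rw [hu, one_div] at hcu; exact hcu
    rw [inv_pow] at this
    exact inv_injective this
  -- v ^ m = v
  have hodd : Odd (p ^ r) := (hp.odd_of_ne_two (by omega)).pow
  have hvm : (a / b) ^ m = a / b := by
    have : -((a / b) ^ m) = -(a / b) := by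
      rw [← (hrm ▸ hodd : Odd m).neg_pow, ← hw, hcw, hw]
    exact neg_injective this
  have ham : a ^ m = a := by
    have hab' : a = (a / b) * b := by field_simp
    calc a ^ m = ((a / b) * b) ^ m := by rw [← hab']
      _ = (a / b) ^ m * b ^ m := mul_pow _ _ _
      _ = (a / b) * b := by rw [hvm, hbm]
      _ = a := by field_simp
  exact ⟨r, hr0, hrm, by rw [← hrm]; exact ham, by rw [← hrm]; exact hbm⟩
end

section
/- Let K be a field of characteristic p > 3. The projective plane curve X²Z² + Y²Z² - X²Y² = 0 is irreducible over the algebraic closure of K. -/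
open MvPolynomial

namespace Stmt4Aux

variable {F : Type*} [Field F]

lemma not_X0_dvd_X1 : ¬ (X 0 : MvPolynomial (Fin 2) F) ∣ X 1 := by
  intro h
  have h2 := map_dvd (eval (fun i : Fin 2 => if i = 0 then (0 : F) else 1)) h
  simp at h2

lemma not_X1_dvd_X0 : ¬ (X 1 : MvPolynomial (Fin 2) F) ∣ X 0 := by
  intro h
  have h2 := map_dvd (eval (fun i : Fin 2 => if i = 0 then (1 : F) else 0)) h
  simp at h2

lemma prime_X0 : Prime (X 0 : MvPolynomial (Fin 2) F) := by
  rw [← MulEquiv.prime_iff (finSuccEquiv F 1).toMulEquiv]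
  have : (finSuccEquiv F 1).toMulEquiv (X 0) = Polynomial.X := finSuccEquiv_X_zero
  rw [this]
  exact Polynomial.prime_X

lemma prime_X0' : Prime (X 0 : MvPolynomial (Fin 1) F) := by
  rw [← MulEquiv.prime_iff (finSuccEquiv F 0).toMulEquiv]
  have : (finSuccEquiv F 0).toMulEquiv (X 0) = Polynomial.X := finSuccEquiv_X_zero
  rw [this]
  exact Polynomial.prime_X

lemma prime_X1 : Prime (X 1 : MvPolynomial (Fin 2) F) := by
  rw [← MulEquiv.prime_iff (finSuccEquiv F 1).toMulEquiv]
  have : (finSuccEquiv F 1).toMulEquiv (X 1) = Polynomial.C (X 0) := by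
    have : (1 : Fin 2) = Fin.succ 0 := rfl
    rw [this]; exact finSuccEquiv_X_succ
  rw [this, Polynomial.prime_C_iff]
  exact prime_X0'

noncomputable def φ : MvPolynomial (Fin 2) F →ₐ[F] MvPolynomial (Fin 2) F :=
  aeval (fun i : Fin 2 => if i = 0 then X 1 - X 0 else X 1)

lemma φφ : (φ (F := F)).comp φ = AlgHom.id F (MvPolynomial (Fin 2) F) := by
  apply MvPolynomial.algHom_ext
  intro i
  fin_cases i <;> simp [φ]

noncomputable def e2 : MvPolynomial (Fin 2) F ≃ₐ[F] MvPolynomial (Fin 2) F :=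
  AlgEquiv.ofAlgHom φ φ φφ φφ

lemma prime_sub : Prime (X 1 - X 0 : MvPolynomial (Fin 2) F) := by
  have h : (X 1 - X 0 : MvPolynomial (Fin 2) F) = e2 (X 0) := by
    simp [e2, φ]
  rw [h]
  exact (MulEquiv.prime_iff (e2 (F := F)).toMulEquiv).mpr prime_X0

lemma not_dvd_add (h2 : (2 : F) ≠ 0) :
    ¬ (X 1 - X 0 : MvPolynomial (Fin 2) F) ∣ (X 1 + X 0) := by
  intro h
  have h' := map_dvd (aeval (R := F)
    (fun i : Fin 2 => if i = 0 then (X 0 : MvPolynomial (Fin 2) F) else X 1 + X 0)) h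
  simp only [map_sub, map_add, aeval_X, if_true, if_pos rfl,
    if_neg (by decide : (1 : Fin 2) ≠ 0)] at h'
  norm_num at h'
  have hC : (C 2 : MvPolynomial (Fin 2) F) = 2 := map_ofNat _ 2
  have h'' : (X 1 : MvPolynomial (Fin 2) F) ∣ C 2 * X 0 := by
    have he : (X 1 + X 0 + X 0 : MvPolynomial (Fin 2) F) = C 2 * X 0 + X 1 := by
      rw [hC]; ring
    rw [he] at h'
    exact (dvd_add_left dvd_rfl).mp h'
  have hu : IsUnit (C 2 : MvPolynomial (Fin 2) F) :=
    (isUnit_iff_ne_zero.mpr h2).map MvPolynomial.C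
  exact not_X1_dvd_X0 (hu.dvd_mul_left.mp h'')

end Stmt4Aux

namespace Stmt4Aux
variable {F : Type*} [Field F] [IsAlgClosed F]

set_option maxHeartbeats 2000000 in
set_option synthInstance.maxHeartbeats 200000 in
lemma key (h2 : (2 : F) ≠ 0) :
    Irreducible (Polynomial.C ((X 1 : MvPolynomial (Fin 2) F) ^ 2 - (X 0) ^ 2) * Polynomial.X ^ 2
      + Polynomial.C ((X 0 : MvPolynomial (Fin 2) F) ^ 2 * (X 1) ^ 2)) := by
  set R := MvPolynomial (Fin 2) F
  set a : R := (X 1) ^ 2 - (X 0) ^ 2 with ha_def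
  set c : R := (X 0) ^ 2 * (X 1) ^ 2 with hc_def
  have ha : a ≠ 0 := by
    intro h
    have := congrArg (eval (fun i : Fin 2 => if i = 0 then (0 : F) else 1)) h
    simp [ha_def] at this
  have hc : c ≠ 0 :=
    mul_ne_zero (pow_ne_zero _ (X_ne_zero 0)) (pow_ne_zero _ (X_ne_zero 1))
  -- primitivity
  have hprim : (Polynomial.C a * Polynomial.X ^ 2 + Polynomial.C c).IsPrimitive := by
    intro r hr
    rw [Polynomial.C_dvd_iff_dvd_coeff] at hr
    have h0 := hr 0
    have hr2 := hr 2
    simp [Polynomial.coeff_add, Polynomial.coeff_C_mul, Polynomial.coeff_X_pow,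
      Polynomial.coeff_C] at h0 hr2
    have hz4 : r ∣ (X 1 : R) ^ 4 := by
      have h := dvd_add (hr2.mul_left ((X 1 : R) ^ 2)) h0
      have heq : (X 1 : R) ^ 2 * a + c = (X 1) ^ 4 := by rw [ha_def, hc_def]; ring
      rwa [heq] at h
    have hy4 : r ∣ (X 0 : R) ^ 4 := by
      have h := dvd_sub h0 (hr2.mul_left ((X 0 : R) ^ 2))
      have heq : c - (X 0 : R) ^ 2 * a = (X 0) ^ 4 := by rw [ha_def, hc_def]; ring
      rwa [heq] at h
    obtain ⟨i, hi, hass⟩ := (dvd_prime_pow prime_X0 4).mp hy4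
    by_cases hi0 : i = 0
    · subst hi0
      exact associated_one_iff_isUnit.mp (by simpa using hass)
    · exfalso
      have hX0r : (X 0 : R) ∣ r := (dvd_pow_self (X 0) hi0).trans hass.symm.dvd
      exact not_X0_dvd_X1 (prime_X0.dvd_of_dvd_pow (hX0r.trans hz4))
  letI : NormalizationMonoid R :=
    (UniqueFactorizationMonoid.strongNormalizationMonoid (α := R)).toNormalizationMonoid
  letI := UniqueFactorizationMonoid.toNormalizedGCDMonoid R
  rw [hprim.irreducible_iff_irreducible_map_fraction_map (K := FractionRing R)]
  set A := algebraMap R (FractionRing R) with hA_def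
  have hinj : Function.Injective A := IsFractionRing.injective R (FractionRing R)
  have hAa : A a ≠ 0 := fun h => ha (hinj (by simpa using h))
  have hAc : A c ≠ 0 := fun h => hc (hinj (by simpa using h))
  have hmap : (Polynomial.C a * Polynomial.X ^ 2 + Polynomial.C c).map A
      = Polynomial.C (A a) * Polynomial.X ^ 2 + Polynomial.C (A c) := by
    simp
  rw [hmap]
  have hd2 : (Polynomial.C (A a) * Polynomial.X ^ 2).natDegree = 2 :=
    Polynomial.natDegree_C_mul_X_pow 2 _ hAa
  have hdeg : (Polynomial.C (A a) * Polynomial.X ^ 2 + Polynomial.C (A c)).natDegree = 2 := by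
    rw [Polynomial.natDegree_add_C, hd2]
  rw [Polynomial.irreducible_iff_roots_eq_zero_of_degree_le_three (by omega) (by omega)]
  by_contra hne
  obtain ⟨x, hx⟩ := Multiset.exists_mem_of_ne_zero hne
  have hP0 : (Polynomial.C (A a) * Polynomial.X ^ 2 + Polynomial.C (A c)) ≠ 0 := by
    intro h; rw [h] at hdeg; simp at hdeg
  rw [Polynomial.mem_roots hP0] at hx
  have hx' : A a * x ^ 2 + A c = 0 := by
    simpa [Polynomial.IsRoot] using hx
  have hx0 : x ≠ 0 := by
    intro h; rw [h] at hx'; simp at hx'; exact hAc hx'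
  have hrel : A a * x ^ 2 = - A c := by linear_combination hx'
  obtain ⟨i, hi⟩ := IsAlgClosed.exists_pow_nat_eq (-1 : F) (n := 2) (by norm_num)
  have hACi : (A (MvPolynomial.C i * (X 0 * X 1))) ^ 2 = - A c := by
    rw [← map_pow, ← map_neg]
    congr 1
    have h1 : (MvPolynomial.C i * (X 0 * X 1) : R) ^ 2
        = MvPolynomial.C (i ^ 2) * ((X 0 * X 1) ^ 2) := by
      rw [map_pow]; ring
    rw [h1, hi, hc_def]
    simp
    ring
  set w : FractionRing R := A (MvPolynomial.C i * (X 0 * X 1)) / x with hw_def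
  have hw : w ^ 2 = A a := by
    rw [hw_def, div_pow, hACi, eq_comm, eq_div_iff (pow_ne_zero 2 hx0)]
    exact hrel
  have hint : IsIntegral R w := by
    refine ⟨Polynomial.X ^ 2 - Polynomial.C a, Polynomial.monic_X_pow_sub_C a (by norm_num), ?_⟩
    rw [Polynomial.eval₂_sub, Polynomial.eval₂_pow, Polynomial.eval₂_X, Polynomial.eval₂_C,
      hw, sub_self]
  haveI : IsIntegrallyClosed R := inferInstance
  obtain ⟨w₀, hw₀⟩ := IsIntegrallyClosed.isIntegral_iff.mp hint
  have hsq : w₀ ^ 2 = a := hinj (by rw [map_pow, hw₀, hw])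
  have hfac : ((X 1 : R) - X 0) * (X 1 + X 0) = w₀ ^ 2 := by
    rw [hsq, ha_def]; ring
  have hπ : Prime ((X 1 : R) - X 0) := prime_sub
  have h1 : ((X 1 : R) - X 0) ∣ w₀ := hπ.dvd_of_dvd_pow ⟨X 1 + X 0, hfac.symm⟩
  obtain ⟨m, hm⟩ := h1
  have hkey : ((X 1 : R) + X 0) = (X 1 - X 0) * m ^ 2 := by
    apply mul_left_cancel₀ hπ.ne_zero
    rw [hfac, hm]; ring
  exact not_dvd_add h2 ⟨m ^ 2, hkey⟩

end Stmt4Aux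

theorem stmt_4 {K : Type*} [Field K] {p : ℕ} [CharP K p] (hp : p.Prime) (hp3 : 3 < p) :
    Irreducible ((X 0) ^ 2 * (X 2) ^ 2 + (X 1) ^ 2 * (X 2) ^ 2 - (X 0) ^ 2 * (X 1) ^ 2 :
      MvPolynomial (Fin 3) (AlgebraicClosure K)) := by
  set L := AlgebraicClosure K with hL
  haveI : CharP L p := charP_of_injective_algebraMap (algebraMap K L).injective p
  have h2 : (2 : L) ≠ 0 := by
    intro h
    have hd : (p : ℕ) ∣ 2 := (CharP.cast_eq_zero_iff L p 2).mp (by exact_mod_cast h)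
    have := Nat.le_of_dvd (by norm_num) hd
    omega
  rw [← MulEquiv.irreducible_iff (finSuccEquiv L 2)]
  have hX1 : (X 1 : MvPolynomial (Fin 3) L) = X (Fin.succ 0) := rfl
  have hX2 : (X 2 : MvPolynomial (Fin 3) L) = X (Fin.succ 1) := rfl
  have himg : (finSuccEquiv L 2) ((X 0) ^ 2 * (X 2) ^ 2 + (X 1) ^ 2 * (X 2) ^ 2
        - (X 0) ^ 2 * (X 1) ^ 2 : MvPolynomial (Fin 3) L) =
      Polynomial.C ((X 1 : MvPolynomial (Fin 2) L) ^ 2 - (X 0) ^ 2) * Polynomial.X ^ 2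
        + Polynomial.C ((X 0 : MvPolynomial (Fin 2) L) ^ 2 * (X 1) ^ 2) := by
    rw [hX1, hX2]
    simp only [map_sub, map_add, map_mul, map_pow, finSuccEquiv_X_zero, finSuccEquiv_X_succ]
    ring
  rw [himg]
  exact Stmt4Aux.key h2
end

section
/- Let K be an algebraically closed field of characteristic p > 3. The homogeneous polynomial Y²Z² + X²Z² + X²Y² - 2XYZ(X + Y + Z) of degree 4 is irreducible in K[X,Y,Z]. -/
open MvPolynomial

namespace Stmt5Aux

variable {K : Type*} [Field K]

lemma prime_X0 : Prime (X 0 : MvPolynomial (Fin 2) K) := by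
  have h := MulEquiv.prime_iff (p := (X 0 : MvPolynomial (Fin 2) K))
    (MvPolynomial.finSuccEquiv K 1).toRingEquiv.toMulEquiv
  rw [← h]
  simpa [MvPolynomial.finSuccEquiv_X_zero] using Polynomial.prime_X (R := MvPolynomial (Fin 1) K)

lemma prime_X1 : Prime (X 1 : MvPolynomial (Fin 2) K) := by
  have h := (MulEquiv.prime_iff (p := (X 0 : MvPolynomial (Fin 2) K))
    (MvPolynomial.renameEquiv K (Equiv.swap (0 : Fin 2) 1)).toRingEquiv.toMulEquiv).mpr prime_X0
  simpa using h

lemma not_dvd_X01 : ¬ (X 0 : MvPolynomial (Fin 2) K) ∣ X 1 := by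
  rintro ⟨t, ht⟩
  have := congrArg (eval fun i : Fin 2 => if i = 1 then (1:K) else 0) ht
  simp at this

lemma key_unit (c : MvPolynomial (Fin 2) K) (h1 : c ∣ (X 0 - X 1)^2)
    (h2 : c ∣ (X 0)^2 * (X 1)^2) : IsUnit c := by
  by_contra hc
  have hc0 : c ≠ 0 := by
    rintro rfl
    have : ((X 0 - X 1 : MvPolynomial (Fin 2) K))^2 = 0 := zero_dvd_iff.mp h1
    have hne : (X 0 : MvPolynomial (Fin 2) K) ≠ X 1 := fun h => by
      simpa using MvPolynomial.X_injective h
    exact pow_ne_zero 2 (sub_ne_zero.mpr hne) this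
  obtain ⟨q, hqirr, hqc⟩ := WfDvdMonoid.exists_irreducible_factor hc hc0
  have hq : Prime q := UniqueFactorizationMonoid.irreducible_iff_prime.mp hqirr
  have hqs : q ∣ X 0 - X 1 := hq.dvd_of_dvd_pow (hqc.trans h1)
  have hq01 : q ∣ (X 0 : MvPolynomial (Fin 2) K) ∧ q ∣ X 1 := by
    rcases (hq.dvd_mul.mp (hqc.trans h2)) with h | h
    · have h0 : q ∣ (X 0 : MvPolynomial (Fin 2) K) := hq.dvd_of_dvd_pow h
      have h1' : q ∣ (X 1 : MvPolynomial (Fin 2) K) := by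
        have := dvd_sub h0 hqs
        simpa [sub_sub_cancel] using this
      exact ⟨h0, h1'⟩
    · have h1' : q ∣ (X 1 : MvPolynomial (Fin 2) K) := hq.dvd_of_dvd_pow h
      have h0 : q ∣ (X 0 : MvPolynomial (Fin 2) K) := by
        have := dvd_add hqs h1'
        simpa [sub_add_cancel] using this
      exact ⟨h0, h1'⟩
  obtain ⟨hq0, hq1⟩ := hq01
  have hass : Associated q (X 0) := hqirr.associated_of_dvd (prime_X0.irreducible) hq0
  exact not_dvd_X01 (hass.symm.dvd.trans hq1)

lemma nosq (h2 : (2:K) ≠ 0) (m : MvPolynomial (Fin 2) K)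
    (hm : m^2 = (4 * X 0 * X 1)^2 * (X 0 * X 1)) : False := by
  have h4 : (4 : K) ≠ 0 := by
    have : (4 : K) = 2 * 2 := by norm_num
    rw [this]; exact mul_ne_zero h2 h2
  have h4R : (4 : MvPolynomial (Fin 2) K) ≠ 0 := by
    have : (4 : MvPolynomial (Fin 2) K) = C (4 : K) := by
      simp [map_ofNat]
    rw [this]
    simpa using h4
  have hA : (4 * X 0 * X 1 : MvPolynomial (Fin 2) K) ≠ 0 :=
    mul_ne_zero (mul_ne_zero h4R (X_ne_zero 0)) (X_ne_zero 1)
  haveI : IsIntegrallyClosed (MvPolynomial (Fin 2) K) :=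
    UniqueFactorizationMonoid.instIsIntegrallyClosed
  have hdvd : (4 * X 0 * X 1 : MvPolynomial (Fin 2) K)^2 ∣ m^2 := hm ▸ dvd_mul_right _ _
  have hdvd' : (4 * X 0 * X 1 : MvPolynomial (Fin 2) K) ∣ m :=
    (IsIntegrallyClosed.pow_dvd_pow_iff two_ne_zero).mp hdvd
  obtain ⟨t, rfl⟩ := hdvd'
  have ht : t^2 = X 0 * X 1 := by
    have h' : (4 * X 0 * X 1 : MvPolynomial (Fin 2) K)^2 * t^2
        = (4 * X 0 * X 1)^2 * (X 0 * X 1) := by linear_combination hm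
    exact mul_left_cancel₀ (pow_ne_zero 2 hA) h'
  have hy : (X 0 : MvPolynomial (Fin 2) K) ∣ t :=
    prime_X0.dvd_of_dvd_pow (ht ▸ dvd_mul_right _ _)
  obtain ⟨s, rfl⟩ := hy
  have hz : (X 0 : MvPolynomial (Fin 2) K) * (X 0 * s^2) = X 0 * X 1 := by
    linear_combination ht
  have := mul_left_cancel₀ (X_ne_zero (R := K) 0) hz
  exact not_dvd_X01 ⟨s^2, this.symm⟩

lemma irred_quad (h2 : (2:K) ≠ 0) :
    Irreducible (Polynomial.C ((X 0 - X 1)^2) * Polynomial.X^2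
      + Polynomial.C (-(2 * X 0 * X 1 * (X 0 + X 1))) * Polynomial.X
      + Polynomial.C ((X 0)^2 * (X 1)^2) : Polynomial (MvPolynomial (Fin 2) K)) := by
  set u : MvPolynomial (Fin 2) K := (X 0 - X 1)^2 with hu
  set v : MvPolynomial (Fin 2) K := -(2 * X 0 * X 1 * (X 0 + X 1)) with hv
  set w : MvPolynomial (Fin 2) K := (X 0)^2 * (X 1)^2 with hw
  set P : Polynomial (MvPolynomial (Fin 2) K) :=
    Polynomial.C u * Polynomial.X^2 + Polynomial.C v * Polynomial.X + Polynomial.C w with hP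
  have hne : (X 0 : MvPolynomial (Fin 2) K) ≠ X 1 := fun h => by
    simpa using MvPolynomial.X_injective h
  have hu0 : u ≠ 0 := pow_ne_zero 2 (sub_ne_zero.mpr hne)
  have hPdeg : P.natDegree = 2 := Polynomial.natDegree_quadratic hu0
  have hP0 : P ≠ 0 := fun h => by simp [h] at hPdeg
  have hc2 : P.coeff 2 = u := by
    simp [hP, Polynomial.coeff_add, Polynomial.coeff_C_mul, Polynomial.coeff_X_pow,
      Polynomial.coeff_X, Polynomial.coeff_C]
  have hc1 : P.coeff 1 = v := by
    simp [hP, Polynomial.coeff_add, Polynomial.coeff_C_mul, Polynomial.coeff_X_pow,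
      Polynomial.coeff_X, Polynomial.coeff_C]
  have hc0 : P.coeff 0 = w := by
    simp [hP, Polynomial.coeff_add, Polynomial.coeff_C_mul, Polynomial.coeff_X_pow,
      Polynomial.coeff_X, Polynomial.coeff_C]
  constructor
  · exact Polynomial.not_isUnit_of_natDegree_pos P (by omega)
  intro g h hgh
  have hg0 : g ≠ 0 := fun hg => hP0 (by rw [hgh, hg, zero_mul])
  have hh0 : h ≠ 0 := fun hh => hP0 (by rw [hgh, hh, mul_zero])
  have hdeg : g.natDegree + h.natDegree = 2 := by
    rw [← Polynomial.natDegree_mul hg0 hh0, ← hgh, hPdeg]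
  -- constant factor case
  have constCase : ∀ (g' h' : Polynomial (MvPolynomial (Fin 2) K)), P = g' * h' →
      g'.natDegree = 0 → IsUnit g' := by
    intro g' h' hgh' hg'
    obtain ⟨a, rfl⟩ := Polynomial.natDegree_eq_zero.mp hg'
    have hCd : Polynomial.C a ∣ P := ⟨h', hgh'⟩
    have hcoef := (Polynomial.C_dvd_iff_dvd_coeff a P).mp hCd
    have d2 : a ∣ u := by rw [← hc2]; exact hcoef 2
    have d0 : a ∣ w := by rw [← hc0]; exact hcoef 0
    rw [hu] at d2; rw [hw] at d0
    exact Polynomial.isUnit_C.mpr (key_unit a d2 d0)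
  rcases Nat.lt_or_ge g.natDegree 1 with hg1 | hg1
  · exact Or.inl (constCase g h hgh (by omega))
  rcases Nat.lt_or_ge h.natDegree 1 with hh1 | hh1
  · exact Or.inr (constCase h g (by rw [hgh, mul_comm]) (by omega))
  -- both degree 1
  have hg : g.natDegree = 1 := by omega
  have hh : h.natDegree = 1 := by omega
  exfalso
  have hgl : g = Polynomial.C (g.coeff 1) * Polynomial.X + Polynomial.C (g.coeff 0) :=
    Polynomial.eq_X_add_C_of_degree_le_one
      (le_trans Polynomial.degree_le_natDegree (by exact_mod_cast hg.le))
  have hhl : h = Polynomial.C (h.coeff 1) * Polynomial.X + Polynomial.C (h.coeff 0) :=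
    Polynomial.eq_X_add_C_of_degree_le_one
      (le_trans Polynomial.degree_le_natDegree (by exact_mod_cast hh.le))
  set a := g.coeff 1; set b := g.coeff 0; set c := h.coeff 1; set d := h.coeff 0
  have hprod : P = Polynomial.C (a*c) * Polynomial.X^2 + Polynomial.C (a*d + b*c) * Polynomial.X
      + Polynomial.C (b*d) := by
    rw [hgh, hgl, hhl]; push_cast [map_add, map_mul]; ring
  have e2 : u = a * c := by
    have := congrArg (fun q => Polynomial.coeff q 2) hprod
    simpa [-map_mul, Polynomial.coeff_add, Polynomial.coeff_C_mul, Polynomial.coeff_X_pow,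
      Polynomial.coeff_X, Polynomial.coeff_C, hc2] using this
  have e1 : v = a * d + b * c := by
    have := congrArg (fun q => Polynomial.coeff q 1) hprod
    simpa [-map_mul, Polynomial.coeff_add, Polynomial.coeff_C_mul, Polynomial.coeff_X_pow,
      Polynomial.coeff_X, Polynomial.coeff_C, hc1] using this
  have e0 : w = b * d := by
    have := congrArg (fun q => Polynomial.coeff q 0) hprod
    simpa [-map_mul, Polynomial.coeff_add, Polynomial.coeff_C_mul, Polynomial.coeff_X_pow,
      Polynomial.coeff_X, Polynomial.coeff_C, hc0] using this
  apply nosq h2 (a*d - b*c)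
  rw [hu] at e2; rw [hv] at e1; rw [hw] at e0
  linear_combination (-((-(2 * X 0 * X 1 * (X 0 + X 1))) + (a*d + b*c))) * e1
    + 4 * (b*d) * e2 + 4 * (X 0 - X 1)^2 * e0

end Stmt5Aux

theorem stmt_5 {K : Type*} [Field K] [IsAlgClosed K] {p : ℕ} [CharP K p]
    (hp : p.Prime) (hp3 : 3 < p) :
    Irreducible ((X 1) ^ 2 * (X 2) ^ 2 + (X 0) ^ 2 * (X 2) ^ 2 + (X 0) ^ 2 * (X 1) ^ 2 -
      2 * X 0 * X 1 * X 2 * (X 0 + X 1 + X 2) : MvPolynomial (Fin 3) K) := by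
  have h2 : (2:K) ≠ 0 := by
    intro h
    have hd : p ∣ 2 := (CharP.cast_eq_zero_iff K p 2).mp (by exact_mod_cast h)
    have := Nat.le_of_dvd (by norm_num) hd
    omega
  have heq : (MvPolynomial.finSuccEquiv K 2)
      ((X 1) ^ 2 * (X 2) ^ 2 + (X 0) ^ 2 * (X 2) ^ 2 + (X 0) ^ 2 * (X 1) ^ 2 -
        2 * X 0 * X 1 * X 2 * (X 0 + X 1 + X 2) : MvPolynomial (Fin 3) K)
      = Polynomial.C ((X 0 - X 1)^2) * Polynomial.X^2
        + Polynomial.C (-(2 * X 0 * X 1 * (X 0 + X 1))) * Polynomial.X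
        + Polynomial.C ((X 0)^2 * (X 1)^2) := by
    have h1 : (X 1 : MvPolynomial (Fin 3) K) = X (Fin.succ 0) := rfl
    have h2 : (X 2 : MvPolynomial (Fin 3) K) = X (Fin.succ 1) := rfl
    rw [h1, h2]
    simp only [map_add, map_sub, map_mul, map_pow, map_neg, map_ofNat, finSuccEquiv_X_zero,
      finSuccEquiv_X_succ]
    ring
  rw [← MulEquiv.irreducible_iff (MvPolynomial.finSuccEquiv K 2).toRingEquiv.toMulEquiv]
  show Irreducible ((MvPolynomial.finSuccEquiv K 2)
      ((X 1) ^ 2 * (X 2) ^ 2 + (X 0) ^ 2 * (X 2) ^ 2 + (X 0) ^ 2 * (X 1) ^ 2 -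
        2 * X 0 * X 1 * X 2 * (X 0 + X 1 + X 2) : MvPolynomial (Fin 3) K))
  rw [heq]
  exact Stmt5Aux.irred_quad h2
end

section
/- Let K be an algebraically closed field of characteristic p > 3. The homogeneous polynomial X⁶ + Y⁶ + Z⁶ - 2(X³Y³ + X³Z³ + Y³Z³) of degree 6 is irreducible in K[X,Y,Z]. -/
set_option maxHeartbeats 1000000
set_option synthInstance.maxHeartbeats 400000
section AuxUniv
open Polynomial IntermediateField
open Polynomial

lemma aux_no_sqrt_X {K : Type*} [Field K] (g : K[X]) : g ^ 2 ≠ X := by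
  intro h
  have h1 := congrArg natDegree h
  rw [natDegree_pow, natDegree_X] at h1
  omega

lemma aux_no_cbrt {K : Type*} [Field K] (h3 : (3:K) ≠ 0) (g : K[X]) :
    g ^ 3 ≠ ((X:K[X]) ^ 3 - 1) ^ 2 := by
  classical
  intro h
  have hne : ((X:K[X])^3 - 1) ≠ 0 := by
    intro h0
    have := congrArg (eval 0) h0
    simp at this
  have hg : g ≠ 0 := by
    rintro rfl
    rw [zero_pow (by norm_num)] at h
    exact hne (pow_eq_zero_iff (n := 2) (by norm_num) |>.mp h.symm)
  have hfac : (X:K[X])^3 - 1 = (X - C 1) * (X^2 + X + C 1) := by rw [C_1]; ring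
  have hq0 : rootMultiplicity (1:K) ((X:K[X])^2 + X + C 1) = 0 := by
    apply rootMultiplicity_eq_zero
    simp only [IsRoot, eval_add, eval_pow, eval_X, eval_C, one_pow]
    intro h0
    apply h3
    rw [show (3:K) = 1 + 1 + 1 by norm_num]
    exact h0
  have h1 : rootMultiplicity (1:K) ((X:K[X])^3 - 1) = 1 := by
    rw [hfac, rootMultiplicity_mul (by rw [← hfac]; exact hne), rootMultiplicity_X_sub_C, hq0]
    simp
  have hRHS : rootMultiplicity (1:K) (((X:K[X])^3 - 1)^2) = 2 := by
    rw [show ((X:K[X])^3-1)^2 = ((X:K[X])^3-1) * ((X:K[X])^3-1) by ring,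
      rootMultiplicity_mul (mul_ne_zero hne hne), h1]
  have hLHS : rootMultiplicity (1:K) (g^3) = 3 * rootMultiplicity (1:K) g := by
    rw [show g^3 = g * (g * g) by ring,
      rootMultiplicity_mul (by simpa [pow_succ, pow_two] using pow_ne_zero 3 hg),
      rootMultiplicity_mul (mul_ne_zero hg hg)]
    ring
  rw [h] at hLHS
  omega


end AuxUniv

noncomputable section AuxIrr
open Polynomial
variable (K : Type*) [Field K]

abbrev R2K := MvPolynomial (Fin 2) K
abbrev F0K := FractionRing (R2K K)

def xxK : F0K K := algebraMap (R2K K) (F0K K) (MvPolynomial.X 0)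
def yyK : F0K K := algebraMap (R2K K) (F0K K) (MvPolynomial.X 1)

def q1K : (F0K K)[X] := X ^ 2 - C (xxK K * yyK K)

-- the evaluation R2 → K[X], X0 ↦ X, X1 ↦ 1
def psiK : R2K K →+* K[X] := (MvPolynomial.aeval ![X, 1]).toRingHom

lemma psiK_X0 : psiK K (MvPolynomial.X 0) = X := by simp [psiK]
lemma psiK_X1 : psiK K (MvPolynomial.X 1) = 1 := by simp [psiK]

-- descend a power equation from F0 to R2
lemma descend_pow (n : ℕ) (hn : 0 < n) (b : F0K K) (d : R2K K)
    (h : b ^ n = algebraMap (R2K K) (F0K K) d) : ∃ c : R2K K, c ^ n = d := by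
  have hint : IsIntegral (R2K K) b := by
    refine ⟨X ^ n - C d, monic_X_pow_sub_C d hn.ne', ?_⟩
    simp [eval₂_sub, eval₂_pow, h]
  obtain ⟨c, hc⟩ := IsIntegrallyClosed.isIntegral_iff.mp hint
  refine ⟨c, IsFractionRing.injective (R2K K) (F0K K) ?_⟩
  rw [map_pow, hc, h]

lemma q1K_irr : Irreducible (q1K K) := by
  apply X_pow_sub_C_irreducible_of_prime Nat.prime_two
  intro b hb
  obtain ⟨c, hc⟩ := descend_pow K 2 (by norm_num) b _ (by rw [hb, xxK, yyK, map_mul])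
  have := congrArg (psiK K) hc
  rw [map_pow, map_mul, psiK_X0, psiK_X1, mul_one] at this
  exact aux_no_sqrt_X _ this

instance : Fact (Irreducible (q1K K)) := ⟨q1K_irr K⟩

abbrev F1K := AdjoinRoot (q1K K)

def wwK : F1K K := AdjoinRoot.root (q1K K)

lemma wwK_sq : wwK K ^ 2 = algebraMap (F0K K) (F1K K) (xxK K * yyK K) := by
  have h0 : (aeval (wwK K)) (q1K K) = 0 := by
    rw [wwK, AdjoinRoot.aeval_eq, AdjoinRoot.mk_self]
  change (aeval (wwK K)) (X ^ 2 - C (xxK K * yyK K) : (F0K K)[X]) = 0 at h0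
  simp only [map_sub, map_pow, aeval_X, aeval_C] at h0
  rw [sub_eq_zero] at h0
  exact h0

def ccK : F1K K :=
  algebraMap (F0K K) (F1K K) (xxK K ^ 3 + yyK K ^ 3) +
    algebraMap (F0K K) (F1K K) (2 * xxK K * yyK K) * wwK K

def q2K : (F1K K)[X] := X ^ 3 - C (ccK K)

end AuxIrr

noncomputable section AuxIrr2
open Polynomial
variable (K : Type*) [Field K]

lemma q2K_irr (h3K : (3:K) ≠ 0) : Irreducible (q2K K) := by
  apply X_pow_sub_C_irreducible_of_prime Nat.prime_three
  intro t ht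
  have hroot : (aeval (-(wwK K))) (q1K K) = 0 := by
    change (aeval (-(wwK K))) (X ^ 2 - C (xxK K * yyK K) : (F0K K)[X]) = 0
    simp only [map_sub, map_pow, aeval_X, aeval_C]
    rw [show (-(wwK K))^2 = wwK K^2 by ring, wwK_sq, sub_self]
  set σ : F1K K →ₐ[F0K K] F1K K := AdjoinRoot.liftAlgHom (q1K K) (Algebra.ofId (F0K K) (F1K K)) (-(wwK K)) hroot with hσdef
  have hσw : σ (wwK K) = -(wwK K) := AdjoinRoot.liftAlgHom_root (q1K K) _ _ hroot
  have hσc : σ (ccK K) = algebraMap (F0K K) (F1K K) (xxK K ^ 3 + yyK K ^ 3)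
      - algebraMap (F0K K) (F1K K) (2 * xxK K * yyK K) * wwK K := by
    unfold ccK
    rw [map_add, map_mul, σ.commutes, σ.commutes, hσw]
    ring
  have hcc : ccK K * σ (ccK K)
      = algebraMap (F0K K) (F1K K) ((xxK K ^ 3 - yyK K ^ 3) ^ 2) := by
    rw [hσc]
    unfold ccK
    have expand : (algebraMap (F0K K) (F1K K) (xxK K ^ 3 + yyK K ^ 3) +
        algebraMap (F0K K) (F1K K) (2 * xxK K * yyK K) * wwK K) *
        (algebraMap (F0K K) (F1K K) (xxK K ^ 3 + yyK K ^ 3) -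
        algebraMap (F0K K) (F1K K) (2 * xxK K * yyK K) * wwK K)
        = algebraMap (F0K K) (F1K K) (xxK K ^ 3 + yyK K ^ 3) ^ 2 -
          algebraMap (F0K K) (F1K K) (2 * xxK K * yyK K) ^ 2 * wwK K ^ 2 := by ring
    rw [expand, wwK_sq]
    simp only [← map_pow, ← map_mul, ← map_sub]
    congr 1
    ring
  have hN3 : (t * σ t) ^ 3 = algebraMap (F0K K) (F1K K) ((xxK K ^ 3 - yyK K ^ 3) ^ 2) := by
    rw [mul_pow, ht, ← map_pow, ht, hcc]
  have hδ : ∀ e : F0K K, e ^ 3 ≠ (xxK K ^ 3 - yyK K ^ 3) ^ 2 := by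
    intro e he
    obtain ⟨c, hc⟩ := descend_pow K 3 (by norm_num) e
      ((MvPolynomial.X 0 ^ 3 - MvPolynomial.X 1 ^ 3) ^ 2) (by
        rw [he, xxK, yyK]; simp only [map_pow, map_sub])
    have h2 := congrArg (psiK K) hc
    rw [map_pow, map_pow, map_sub, map_pow, map_pow, psiK_X0, psiK_X1, one_pow] at h2
    exact aux_no_cbrt h3K _ h2
  have hirr : Irreducible (X ^ 3 - C ((xxK K ^ 3 - yyK K ^ 3) ^ 2) : (F0K K)[X]) :=
    X_pow_sub_C_irreducible_of_prime Nat.prime_three hδ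
  have haN : (aeval (t * σ t)) (X ^ 3 - C ((xxK K ^ 3 - yyK K ^ 3) ^ 2) : (F0K K)[X]) = 0 := by
    rw [map_sub, map_pow, aeval_X, aeval_C, hN3, sub_self]
  have hmin := minpoly.eq_of_irreducible_of_monic hirr haN
    (monic_X_pow_sub_C _ (by norm_num))
  haveI : FiniteDimensional (F0K K) (F1K K) :=
    Module.Finite.of_basis (AdjoinRoot.powerBasis (q1K_irr K).ne_zero).basis
  have hfr : Module.finrank (F0K K) (F1K K) = 2 := by
    rw [(AdjoinRoot.powerBasis (q1K_irr K).ne_zero).finrank, AdjoinRoot.powerBasis_dim]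
    unfold q1K
    exact natDegree_X_pow_sub_C
  have hle := minpoly.natDegree_le (A := F0K K) (t * σ t)
  rw [← hmin, natDegree_X_pow_sub_C, hfr] at hle
  exact absurd hle (by norm_num)

end AuxIrr2


noncomputable section AuxIrr3
open Polynomial IntermediateField
variable (K : Type*) [Field K]

abbrev F2K := AdjoinRoot (q2K K)

def zzK : F2K K := AdjoinRoot.root (q2K K)

def P0K : (F0K K)[X] :=
  X ^ 6 - C (2 * (xxK K ^ 3 + yyK K ^ 3)) * X ^ 3 + C ((xxK K ^ 3 - yyK K ^ 3) ^ 2)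

lemma P0K_monic : (P0K K).Monic := by
  unfold P0K
  monicity!

lemma P0K_natDegree : (P0K K).natDegree = 6 := by
  unfold P0K
  compute_degree!

lemma zzK_cube : zzK K ^ 3 = algebraMap (F1K K) (F2K K) (ccK K) := by
  have h0 : (aeval (zzK K)) (q2K K) = 0 := by
    rw [zzK, AdjoinRoot.aeval_eq, AdjoinRoot.mk_self]
  change (aeval (zzK K)) (X ^ 3 - C (ccK K) : (F1K K)[X]) = 0 at h0
  rw [map_sub, map_pow, aeval_X, aeval_C, sub_eq_zero] at h0
  exact h0

lemma ccK_map : algebraMap (F1K K) (F2K K) (ccK K) =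
    (algebraMap (F0K K) (F2K K) (xxK K) ^ 3 + algebraMap (F0K K) (F2K K) (yyK K) ^ 3) +
    (2 * algebraMap (F0K K) (F2K K) (xxK K) * algebraMap (F0K K) (F2K K) (yyK K)) *
      algebraMap (F1K K) (F2K K) (wwK K) := by
  unfold ccK
  rw [map_add, map_mul, ← IsScalarTower.algebraMap_apply, ← IsScalarTower.algebraMap_apply]
  simp only [map_add, map_mul, map_pow, map_ofNat]

lemma wwK_map_sq : algebraMap (F1K K) (F2K K) (wwK K) ^ 2 =
    algebraMap (F0K K) (F2K K) (xxK K) * algebraMap (F0K K) (F2K K) (yyK K) := by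
  rw [← map_pow, wwK_sq, ← IsScalarTower.algebraMap_apply, map_mul]

lemma P0K_aeval : (aeval (zzK K)) (P0K K) = 0 := by
  set u1 := algebraMap (F0K K) (F2K K) (xxK K) with hu1
  set v1 := algebraMap (F0K K) (F2K K) (yyK K) with hv1
  set w2 := algebraMap (F1K K) (F2K K) (wwK K) with hw2
  unfold P0K
  rw [map_add, map_sub, map_mul, map_pow, map_pow, aeval_X, aeval_C, aeval_C]
  rw [show zzK K ^ 6 = (zzK K ^ 3) ^ 2 by ring, zzK_cube, ccK_map]
  simp only [map_mul, map_add, map_sub, map_pow, map_ofNat, ← hu1, ← hv1, ← hw2]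
  linear_combination ((2:F2K K)*u1*v1)^2 * wwK_map_sq K

lemma P0K_irr (h2K : (2:K) ≠ 0) (h3K : (3:K) ≠ 0) : Irreducible (P0K K) := by
  haveI : Fact (Irreducible (q2K K)) := ⟨q2K_irr K h3K⟩
  have hzint : IsIntegral (F0K K) (zzK K) :=
    ⟨P0K K, P0K_monic K, by rw [← aeval_def]; exact P0K_aeval K⟩
  have hzmem : zzK K ∈ (F0K K)⟮zzK K⟯ := IntermediateField.mem_adjoin_simple_self _ _
  -- nonvanishing facts
  have hx0 : (MvPolynomial.X 0 : R2K K) ≠ 0 := MvPolynomial.X_ne_zero _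
  have hy0 : (MvPolynomial.X 1 : R2K K) ≠ 0 := MvPolynomial.X_ne_zero _
  have h2R2 : ((2:R2K K) ≠ 0) := by
    intro h
    apply h2K
    have h' : (MvPolynomial.C (2:K) : R2K K) = 0 := by rw [map_ofNat]; exact h
    exact (MvPolynomial.C_eq_zero.mp h')
  have hxx : xxK K ≠ 0 := by
    rw [xxK]
    exact fun h => hx0 (IsFractionRing.injective (R2K K) (F0K K) (by rw [h, map_zero]))
  have hyy : yyK K ≠ 0 := by
    rw [yyK]
    exact fun h => hy0 (IsFractionRing.injective (R2K K) (F0K K) (by rw [h, map_zero]))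
  have h2F : ((2:F0K K) ≠ 0) := by
    intro h
    apply h2R2
    apply IsFractionRing.injective (R2K K) (F0K K)
    rw [map_zero, map_ofNat]
    exact h
  have hBne : algebraMap (F0K K) (F2K K) (2 * xxK K * yyK K) ≠ 0 := by
    simpa using mul_ne_zero (mul_ne_zero h2F hxx) hyy
  have hw2mem : algebraMap (F1K K) (F2K K) (wwK K) ∈ (F0K K)⟮zzK K⟯ := by
    have hexpr : algebraMap (F1K K) (F2K K) (wwK K) =
        (zzK K ^ 3 - algebraMap (F0K K) (F2K K) (xxK K ^ 3 + yyK K ^ 3)) *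
        (algebraMap (F0K K) (F2K K) (2 * xxK K * yyK K))⁻¹ := by
      rw [eq_comm, mul_inv_eq_iff_eq_mul₀ hBne, zzK_cube, ccK_map]
      simp only [map_mul, map_add, map_pow, map_ofNat]
      ring
    rw [hexpr, ← map_inv₀]
    exact mul_mem (sub_mem (pow_mem hzmem 3) (IntermediateField.algebraMap_mem _ _))
      (IntermediateField.algebraMap_mem _ _)
  have hF1mem : ∀ ξ1 : F1K K, algebraMap (F1K K) (F2K K) ξ1 ∈ (F0K K)⟮zzK K⟯ := by
    intro ξ1
    obtain ⟨h, rfl⟩ := AdjoinRoot.mk_surjective ξ1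
    have hcast : (algebraMap (F1K K) (F2K K)) ((AdjoinRoot.mk (q1K K)) h) =
        (IsScalarTower.toAlgHom (F0K K) (F1K K) (F2K K))
          ((aeval (AdjoinRoot.root (q1K K))) h) := by
      rw [AdjoinRoot.aeval_eq]; rfl
    rw [hcast, ← aeval_algHom_apply]
    rw [aeval_eq_sum_range]
    refine sum_mem fun i _ => ?_
    rw [Algebra.smul_def]
    refine mul_mem (IntermediateField.algebraMap_mem _ _) (pow_mem ?_ i)
    exact hw2mem
  have htop : (F0K K)⟮zzK K⟯ = ⊤ := by
    rw [eq_top_iff]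
    intro ξ _
    obtain ⟨g, rfl⟩ := AdjoinRoot.mk_surjective ξ
    rw [← AdjoinRoot.aeval_eq, aeval_eq_sum_range]
    refine sum_mem fun i _ => ?_
    rw [Algebra.smul_def]
    exact mul_mem (hF1mem _) (pow_mem hzmem i)
  haveI : FiniteDimensional (F0K K) (F1K K) :=
    Module.Finite.of_basis (AdjoinRoot.powerBasis (q1K_irr K).ne_zero).basis
  haveI : FiniteDimensional (F1K K) (F2K K) :=
    Module.Finite.of_basis (AdjoinRoot.powerBasis (q2K_irr K h3K).ne_zero).basis
  have hfr2 : Module.finrank (F0K K) (F1K K) = 2 := by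
    rw [(AdjoinRoot.powerBasis (q1K_irr K).ne_zero).finrank, AdjoinRoot.powerBasis_dim]
    unfold q1K
    exact natDegree_X_pow_sub_C
  have hfr3 : Module.finrank (F1K K) (F2K K) = 3 := by
    rw [(AdjoinRoot.powerBasis (q2K_irr K h3K).ne_zero).finrank, AdjoinRoot.powerBasis_dim]
    unfold q2K
    exact natDegree_X_pow_sub_C
  have hfr6 : Module.finrank (F0K K) (F2K K) = 6 := by
    rw [← Module.finrank_mul_finrank (F0K K) (F1K K) (F2K K), hfr2, hfr3]
  have hdeg : (minpoly (F0K K) (zzK K)).natDegree = 6 := by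
    rw [← IntermediateField.adjoin.finrank hzint, htop, IntermediateField.finrank_top', hfr6]
  obtain ⟨r, hr⟩ := minpoly.dvd (F0K K) (zzK K) (P0K_aeval K)
  have hminmonic := minpoly.monic hzint
  have hrm : r.Monic := by
    have h6 := P0K_monic K
    rw [hr] at h6
    exact hminmonic.of_mul_monic_left h6
  have hrdeg : r.natDegree = 0 := by
    have h7 := P0K_natDegree K
    rw [hr, hminmonic.natDegree_mul hrm, hdeg] at h7
    omega
  have hr1 : r = 1 := (hrm.natDegree_eq_zero).mp hrdeg
  rw [hr1, mul_one] at hr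
  rw [hr]
  exact minpoly.irreducible hzint

end AuxIrr3

noncomputable section AuxIrr4
open Polynomial
variable (K : Type*) [Field K]

def PK : Polynomial (R2K K) :=
  X ^ 6 - C (2 * ((MvPolynomial.X 0 : R2K K) ^ 3 + (MvPolynomial.X 1 : R2K K) ^ 3)) * X ^ 3
    + C (((MvPolynomial.X 0 : R2K K) ^ 3 - (MvPolynomial.X 1 : R2K K) ^ 3) ^ 2)

lemma PK_monic : (PK K).Monic := by
  unfold PK
  monicity!

lemma PK_map : (PK K).map (algebraMap (R2K K) (F0K K)) = P0K K := by
  unfold PK P0K xxK yyK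
  simp only [Polynomial.map_add, Polynomial.map_sub, Polynomial.map_mul, Polynomial.map_pow,
    map_C, map_X, map_ofNat, Polynomial.map_ofNat, map_add, map_sub, map_mul, map_pow]

lemma e_eq : (MvPolynomial.finSuccEquiv K 2)
    ((MvPolynomial.X 0) ^ 6 + (MvPolynomial.X 1) ^ 6 + (MvPolynomial.X 2) ^ 6 -
      2 * ((MvPolynomial.X 0) ^ 3 * (MvPolynomial.X 1) ^ 3 +
        (MvPolynomial.X 0) ^ 3 * (MvPolynomial.X 2) ^ 3 +
        (MvPolynomial.X 1) ^ 3 * (MvPolynomial.X 2) ^ 3) : MvPolynomial (Fin 3) K)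
    = PK K := by
  have h1 : (MvPolynomial.X (1 : Fin 3) : MvPolynomial (Fin 3) K)
      = MvPolynomial.X (Fin.succ 0) := rfl
  have h2 : (MvPolynomial.X (2 : Fin 3) : MvPolynomial (Fin 3) K)
      = MvPolynomial.X (Fin.succ 1) := rfl
  rw [h1, h2]
  simp only [map_add, map_sub, map_mul, map_pow, map_ofNat,
    MvPolynomial.finSuccEquiv_X_zero, MvPolynomial.finSuccEquiv_X_succ]
  unfold PK
  simp only [map_add, map_sub, map_mul, map_pow, map_ofNat]
  ring

end AuxIrr4

open MvPolynomial

theorem stmt_6 {K : Type*} [Field K] [IsAlgClosed K] {p : ℕ} [CharP K p]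
    (hp : p.Prime) (hp3 : 3 < p) :
    Irreducible ((X 0) ^ 6 + (X 1) ^ 6 + (X 2) ^ 6 -
      2 * ((X 0) ^ 3 * (X 1) ^ 3 + (X 0) ^ 3 * (X 2) ^ 3 + (X 1) ^ 3 * (X 2) ^ 3) :
      MvPolynomial (Fin 3) K) := by
  have h2K : (2:K) ≠ 0 := by
    intro h
    have h' : ((2:ℕ):K) = 0 := by exact_mod_cast h
    rw [CharP.cast_eq_zero_iff K p] at h'
    have := Nat.le_of_dvd (by norm_num) h'
    omega
  have h3K : (3:K) ≠ 0 := by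
    intro h
    have h' : ((3:ℕ):K) = 0 := by exact_mod_cast h
    rw [CharP.cast_eq_zero_iff K p] at h'
    have := Nat.le_of_dvd (by norm_num) h'
    omega
  apply (MulEquiv.irreducible_iff (MvPolynomial.finSuccEquiv K 2)).mp
  rw [e_eq]
  rw [(PK_monic K).irreducible_iff_irreducible_map_fraction_map (K := F0K K)]
  rw [PK_map]
  exact P0K_irr K h2K h3K
end

section
/- Let K be an algebraically closed field of characteristic p > 3 and let i ∈ K satisfy i² = -1. The set of singular points of the projective plane curve (X² + Y² - Z²)³ + 27X²Y²Z² = 0 is exactly the ten points {(0:1:1), (0:-1:1), (1:0:1), (-1:0:1), (i:1:0), (-i:1:0), (i:i:1), (i:-i:1), (-i:-i:1), (-i:i:1)}. -/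
open MvPolynomial

set_option maxHeartbeats 1000000 in
theorem stmt_8 {K : Type*} [Field K] [IsAlgClosed K] {p : ℕ} [CharP K p]
    (hp : p.Prime) (hp3 : 3 < p) (i : K) (hi : i ^ 2 = -1)
    (F : MvPolynomial (Fin 3) K)
    (hF : F = ((X 0) ^ 2 + (X 1) ^ 2 - (X 2) ^ 2) ^ 3 +
      27 * (X 0) ^ 2 * (X 1) ^ 2 * (X 2) ^ 2)
    (x y z : K) (hxyz : ¬ (x = 0 ∧ y = 0 ∧ z = 0)) :
    (eval ![x, y, z] F = 0 ∧
      eval ![x, y, z] (pderiv 0 F) = 0 ∧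
      eval ![x, y, z] (pderiv 1 F) = 0 ∧
      eval ![x, y, z] (pderiv 2 F) = 0) ↔
    (∃ c : K, c ≠ 0 ∧
      ((x, y, z) = (c * 0, c * 1, c * 1) ∨
       (x, y, z) = (c * 0, c * (-1), c * 1) ∨
       (x, y, z) = (c * 1, c * 0, c * 1) ∨
       (x, y, z) = (c * (-1), c * 0, c * 1) ∨
       (x, y, z) = (c * i, c * 1, c * 0) ∨
       (x, y, z) = (c * (-i), c * 1, c * 0) ∨
       (x, y, z) = (c * i, c * i, c * 1) ∨
       (x, y, z) = (c * i, c * (-i), c * 1) ∨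
       (x, y, z) = (c * (-i), c * (-i), c * 1) ∨
       (x, y, z) = (c * (-i), c * i, c * 1))) := by
  -- nonzero constants
  have hch : ∀ n : ℕ, 0 < n → n < 4 → (n : K) ≠ 0 := by
    intro n hn hn4 h
    have hd : p ∣ n := (CharP.cast_eq_zero_iff K p n).mp h
    have := Nat.le_of_dvd hn hd
    omega
  have h2 : (2 : K) ≠ 0 := by have := hch 2 (by norm_num) (by norm_num); exact_mod_cast this
  have h3 : (3 : K) ≠ 0 := by have := hch 3 (by norm_num) (by norm_num); exact_mod_cast this
  have h6 : (6 : K) ≠ 0 := by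
    rw [show (6 : K) = 2 * 3 by norm_num]; exact mul_ne_zero h2 h3
  have h9 : (9 : K) ≠ 0 := by
    rw [show (9 : K) = 3 * 3 by norm_num]; exact mul_ne_zero h3 h3
  subst hF
  have h27C : (27 : MvPolynomial (Fin 3) K) = C 27 := (map_ofNat C 27).symm
  -- derivative formulas
  have hd0 : pderiv 0 (((X 0) ^ 2 + (X 1) ^ 2 - (X 2) ^ 2) ^ 3 +
      27 * (X 0) ^ 2 * (X 1) ^ 2 * (X 2) ^ 2 : MvPolynomial (Fin 3) K) =
      6 * X 0 * (((X 0) ^ 2 + (X 1) ^ 2 - (X 2) ^ 2) ^ 2 + 9 * (X 1) ^ 2 * (X 2) ^ 2) := by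
    rw [h27C]
    simp [pderiv_mul, pderiv_pow, pderiv_X, Pi.single_apply, pderiv_C]
    rw [← h27C]
    ring
  have hd1 : pderiv 1 (((X 0) ^ 2 + (X 1) ^ 2 - (X 2) ^ 2) ^ 3 +
      27 * (X 0) ^ 2 * (X 1) ^ 2 * (X 2) ^ 2 : MvPolynomial (Fin 3) K) =
      6 * X 1 * (((X 0) ^ 2 + (X 1) ^ 2 - (X 2) ^ 2) ^ 2 + 9 * (X 0) ^ 2 * (X 2) ^ 2) := by
    rw [h27C]
    simp [pderiv_mul, pderiv_pow, pderiv_X, Pi.single_apply, pderiv_C]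
    rw [← h27C]
    ring
  have hd2 : pderiv 2 (((X 0) ^ 2 + (X 1) ^ 2 - (X 2) ^ 2) ^ 3 +
      27 * (X 0) ^ 2 * (X 1) ^ 2 * (X 2) ^ 2 : MvPolynomial (Fin 3) K) =
      6 * X 2 * (9 * (X 0) ^ 2 * (X 1) ^ 2 - ((X 0) ^ 2 + (X 1) ^ 2 - (X 2) ^ 2) ^ 2) := by
    rw [h27C]
    simp [pderiv_mul, pderiv_pow, pderiv_X, Pi.single_apply, pderiv_C]
    rw [← h27C]
    ring
  have e0 : eval ![x, y, z] (((X 0) ^ 2 + (X 1) ^ 2 - (X 2) ^ 2) ^ 3 +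
      27 * (X 0) ^ 2 * (X 1) ^ 2 * (X 2) ^ 2 : MvPolynomial (Fin 3) K) =
      (x ^ 2 + y ^ 2 - z ^ 2) ^ 3 + 27 * x ^ 2 * y ^ 2 * z ^ 2 := by
    simp
  have e1 : eval ![x, y, z] (pderiv 0 (((X 0) ^ 2 + (X 1) ^ 2 - (X 2) ^ 2) ^ 3 +
      27 * (X 0) ^ 2 * (X 1) ^ 2 * (X 2) ^ 2 : MvPolynomial (Fin 3) K)) =
      6 * x * ((x ^ 2 + y ^ 2 - z ^ 2) ^ 2 + 9 * y ^ 2 * z ^ 2) := by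
    rw [hd0]; simp
  have e2 : eval ![x, y, z] (pderiv 1 (((X 0) ^ 2 + (X 1) ^ 2 - (X 2) ^ 2) ^ 3 +
      27 * (X 0) ^ 2 * (X 1) ^ 2 * (X 2) ^ 2 : MvPolynomial (Fin 3) K)) =
      6 * y * ((x ^ 2 + y ^ 2 - z ^ 2) ^ 2 + 9 * x ^ 2 * z ^ 2) := by
    rw [hd1]; simp
  have e3 : eval ![x, y, z] (pderiv 2 (((X 0) ^ 2 + (X 1) ^ 2 - (X 2) ^ 2) ^ 3 +
      27 * (X 0) ^ 2 * (X 1) ^ 2 * (X 2) ^ 2 : MvPolynomial (Fin 3) K)) =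
      6 * z * (9 * x ^ 2 * y ^ 2 - (x ^ 2 + y ^ 2 - z ^ 2) ^ 2) := by
    rw [hd2]; simp
  rw [e0, e1, e2, e3]
  have mk3 : ∀ a b c d e f : K, a = d → b = e → c = f → ((a, b, c) = (d, e, f)) := by
    intro a b c d e f h1 h2 h3; rw [h1, h2, h3]
  constructor
  · rintro ⟨E0, E1, E2, E3⟩
    have E1' : x * ((x ^ 2 + y ^ 2 - z ^ 2) ^ 2 + 9 * y ^ 2 * z ^ 2) = 0 := by
      have h : (6 : K) * (x * ((x ^ 2 + y ^ 2 - z ^ 2) ^ 2 + 9 * y ^ 2 * z ^ 2)) = 0 := by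
        linear_combination E1
      exact (mul_eq_zero.mp h).resolve_left h6
    have E2' : y * ((x ^ 2 + y ^ 2 - z ^ 2) ^ 2 + 9 * x ^ 2 * z ^ 2) = 0 := by
      have h : (6 : K) * (y * ((x ^ 2 + y ^ 2 - z ^ 2) ^ 2 + 9 * x ^ 2 * z ^ 2)) = 0 := by
        linear_combination E2
      exact (mul_eq_zero.mp h).resolve_left h6
    have E3' : z * (9 * x ^ 2 * y ^ 2 - (x ^ 2 + y ^ 2 - z ^ 2) ^ 2) = 0 := by
      have h : (6 : K) * (z * (9 * x ^ 2 * y ^ 2 - (x ^ 2 + y ^ 2 - z ^ 2) ^ 2)) = 0 := by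
        linear_combination E3
      exact (mul_eq_zero.mp h).resolve_left h6
    by_cases hz : z = 0
    · subst hz
      have hg : x ^ 2 + y ^ 2 = 0 := by
        have h : (x ^ 2 + y ^ 2) ^ 3 = 0 := by linear_combination E0
        exact pow_eq_zero_iff (by norm_num) |>.mp h
      have hy : y ≠ 0 := by
        intro h; subst h
        have hx : x = 0 := by
          have : x ^ 2 = 0 := by linear_combination hg
          exact pow_eq_zero_iff (by norm_num) |>.mp this
        exact hxyz ⟨hx, rfl, rfl⟩
      have hfac : (x - i * y) * (x + i * y) = 0 := by
        linear_combination hg - y ^ 2 * hi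
      rcases mul_eq_zero.mp hfac with h | h
      · exact ⟨y, hy, Or.inr (Or.inr (Or.inr (Or.inr (Or.inl
          (mk3 _ _ _ _ _ _ (by linear_combination h) (by ring) (by ring))))))⟩
      · exact ⟨y, hy, Or.inr (Or.inr (Or.inr (Or.inr (Or.inr (Or.inl
          (mk3 _ _ _ _ _ _ (by linear_combination h) (by ring) (by ring)))))))⟩
    · have A3 : 9 * x ^ 2 * y ^ 2 - (x ^ 2 + y ^ 2 - z ^ 2) ^ 2 = 0 :=
        (mul_eq_zero.mp E3').resolve_left hz
      by_cases hx : x = 0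
      · subst hx
        have hg2 : (y ^ 2 - z ^ 2) ^ 2 = 0 := by linear_combination -A3
        have hg : y ^ 2 - z ^ 2 = 0 := pow_eq_zero_iff (by norm_num) |>.mp hg2
        have hfac : (y - z) * (y + z) = 0 := by linear_combination hg
        rcases mul_eq_zero.mp hfac with h | h
        · exact ⟨z, hz, Or.inl
            (mk3 _ _ _ _ _ _ (by ring) (by linear_combination h) (by ring))⟩
        · exact ⟨z, hz, Or.inr (Or.inl
            (mk3 _ _ _ _ _ _ (by ring) (by linear_combination h) (by ring)))⟩
      · by_cases hy : y = 0
        · subst hy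
          have hg2 : (x ^ 2 - z ^ 2) ^ 2 = 0 := by linear_combination -A3
          have hg : x ^ 2 - z ^ 2 = 0 := pow_eq_zero_iff (by norm_num) |>.mp hg2
          have hfac : (x - z) * (x + z) = 0 := by linear_combination hg
          rcases mul_eq_zero.mp hfac with h | h
          · exact ⟨z, hz, Or.inr (Or.inr (Or.inl
              (mk3 _ _ _ _ _ _ (by linear_combination h) (by ring) (by ring))))⟩
          · exact ⟨z, hz, Or.inr (Or.inr (Or.inr (Or.inl
              (mk3 _ _ _ _ _ _ (by linear_combination h) (by ring) (by ring)))))⟩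
        · have A1 : (x ^ 2 + y ^ 2 - z ^ 2) ^ 2 + 9 * y ^ 2 * z ^ 2 = 0 :=
            (mul_eq_zero.mp E1').resolve_left hx
          have A2 : (x ^ 2 + y ^ 2 - z ^ 2) ^ 2 + 9 * x ^ 2 * z ^ 2 = 0 :=
            (mul_eq_zero.mp E2').resolve_left hy
          have h9z : (9 : K) * z ^ 2 ≠ 0 := mul_ne_zero h9 (pow_ne_zero 2 hz)
          have hxy2 : x ^ 2 = y ^ 2 := by
            apply mul_left_cancel₀ h9z
            linear_combination A2 - A1
          have h9y : (9 : K) * y ^ 2 ≠ 0 := mul_ne_zero h9 (pow_ne_zero 2 hy)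
          have hxz : x ^ 2 = -z ^ 2 := by
            apply mul_left_cancel₀ h9y
            linear_combination A3 + A1
          have hyz : y ^ 2 = -z ^ 2 := hxy2 ▸ hxz
          have hfx : (x - i * z) * (x + i * z) = 0 := by
            linear_combination hxz - z ^ 2 * hi
          have hfy : (y - i * z) * (y + i * z) = 0 := by
            linear_combination hyz - z ^ 2 * hi
          rcases mul_eq_zero.mp hfx with h | h <;> rcases mul_eq_zero.mp hfy with h' | h'
          · exact ⟨z, hz, Or.inr (Or.inr (Or.inr (Or.inr (Or.inr (Or.inr (Or.inl
              (mk3 _ _ _ _ _ _ (by linear_combination h) (by linear_combination h')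
                (by ring))))))))⟩
          · exact ⟨z, hz, Or.inr (Or.inr (Or.inr (Or.inr (Or.inr (Or.inr (Or.inr (Or.inl
              (mk3 _ _ _ _ _ _ (by linear_combination h) (by linear_combination h')
                (by ring)))))))))⟩
          · exact ⟨z, hz, Or.inr (Or.inr (Or.inr (Or.inr (Or.inr (Or.inr (Or.inr (Or.inr (Or.inr
              (mk3 _ _ _ _ _ _ (by linear_combination h) (by linear_combination h')
                (by ring))))))))))⟩
          · exact ⟨z, hz, Or.inr (Or.inr (Or.inr (Or.inr (Or.inr (Or.inr (Or.inr (Or.inr (Or.inl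
              (mk3 _ _ _ _ _ _ (by linear_combination h) (by linear_combination h')
                (by ring))))))))))⟩
  · rintro ⟨c, hc, h | h | h | h | h | h | h | h | h | h⟩ <;>
      (rw [Prod.ext_iff, Prod.ext_iff] at h; obtain ⟨hx, hy, hz⟩ := h;
       subst hx; subst hy; subst hz)
    · exact ⟨by ring, by ring, by ring, by ring⟩
    · exact ⟨by ring, by ring, by ring, by ring⟩
    · exact ⟨by ring, by ring, by ring, by ring⟩
    · exact ⟨by ring, by ring, by ring, by ring⟩
    · exact ⟨by linear_combination (c ^ 6 * (i ^ 2 + 1) ^ 2) * hi,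
        by linear_combination (6 * c ^ 5 * i * (i ^ 2 + 1)) * hi,
        by linear_combination (6 * c ^ 5 * (i ^ 2 + 1)) * hi, by ring⟩
    · exact ⟨by linear_combination (c ^ 6 * (i ^ 2 + 1) ^ 2) * hi,
        by linear_combination (-6 * c ^ 5 * i * (i ^ 2 + 1)) * hi,
        by linear_combination (6 * c ^ 5 * (i ^ 2 + 1)) * hi, by ring⟩
    · exact ⟨by linear_combination (c ^ 6 * (8 * i ^ 4 + 7 * i ^ 2 - 1)) * hi,
        by linear_combination (6 * c ^ 5 * i * (4 * i ^ 2 + 1)) * hi,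
        by linear_combination (6 * c ^ 5 * i * (4 * i ^ 2 + 1)) * hi,
        by linear_combination (6 * c ^ 5 * (5 * i ^ 2 - 1)) * hi⟩
    · exact ⟨by linear_combination (c ^ 6 * (8 * i ^ 4 + 7 * i ^ 2 - 1)) * hi,
        by linear_combination (6 * c ^ 5 * i * (4 * i ^ 2 + 1)) * hi,
        by linear_combination (-6 * c ^ 5 * i * (4 * i ^ 2 + 1)) * hi,
        by linear_combination (6 * c ^ 5 * (5 * i ^ 2 - 1)) * hi⟩
    · exact ⟨by linear_combination (c ^ 6 * (8 * i ^ 4 + 7 * i ^ 2 - 1)) * hi,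
        by linear_combination (-6 * c ^ 5 * i * (4 * i ^ 2 + 1)) * hi,
        by linear_combination (-6 * c ^ 5 * i * (4 * i ^ 2 + 1)) * hi,
        by linear_combination (6 * c ^ 5 * (5 * i ^ 2 - 1)) * hi⟩
    · exact ⟨by linear_combination (c ^ 6 * (8 * i ^ 4 + 7 * i ^ 2 - 1)) * hi,
        by linear_combination (-6 * c ^ 5 * i * (4 * i ^ 2 + 1)) * hi,
        by linear_combination (6 * c ^ 5 * i * (4 * i ^ 2 + 1)) * hi,
        by linear_combination (6 * c ^ 5 * (5 * i ^ 2 - 1)) * hi⟩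
end

section
/- Let q = p^h with p prime, p > 11, and let n = 3(q-1)/(p^r - 1) where r < h divides h. Let a, b ∈ 𝔽_{p^r} with ab ≠ 0, and suppose p^r ≢ 1 (mod 3). Then the number of projective points (x₀:x₁:x₂) ∈ ℙ²(𝔽_q) satisfying ax₀^n + bx₁^n = x₂^n equals (n²/9)(p^r - 2) + n. -/
open Finset Polynomial

-- cube map is injective on (t-1)-th roots of unity when t-1 = 3s+1
lemma aux_cube_inj {F : Type*} [Field F] {t s : ℕ} (hts : t - 1 = 3 * s + 1)
    {z₁ z₂ : F} (h1 : z₁ ^ (t - 1) = 1) (h2 : z₂ ^ (t - 1) = 1)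
    (h3 : z₁ ^ 3 = z₂ ^ 3) : z₁ = z₂ := by
  have e1 : z₁ ^ (3 * s) * z₁ = 1 := by rw [← pow_succ, ← hts, h1]
  have e2 : z₁ ^ (3 * s) * z₂ = 1 := by
    have : z₁ ^ (3 * s) = z₂ ^ (3 * s) := by
      rw [pow_mul, pow_mul, h3]
    rw [this, ← pow_succ, ← hts, h2]
  have hne : z₁ ^ (3 * s) ≠ 0 := left_ne_zero_of_mul_eq_one e1
  exact mul_left_cancel₀ hne (e1.trans e2.symm)

-- cube map is surjective on (t-1)-th roots of unity
lemma aux_cube_surj {F : Type*} [Field F] [Fintype F] {t s : ℕ} (hts : t - 1 = 3 * s + 1)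
    {d : F} (hd : d ≠ 0) (hdt : d ^ (t - 1) = 1) :
    ∃ z : F, z ≠ 0 ∧ z ^ (t - 1) = 1 ∧ z ^ 3 = d := by
  classical
  set Hf : Finset F := univ.filter (fun z : F => z ≠ 0 ∧ z ^ (t - 1) = 1) with hH
  have hsub : Hf.image (· ^ 3) ⊆ Hf := by
    intro w hw
    simp only [Finset.mem_image] at hw
    obtain ⟨z, hz, rfl⟩ := hw
    simp only [hH, Finset.mem_filter, Finset.mem_univ, true_and] at hz ⊢
    exact ⟨pow_ne_zero _ hz.1, by rw [← pow_mul, mul_comm, pow_mul, hz.2, one_pow]⟩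
  have hcard : (Hf.image (· ^ 3)).card = Hf.card := by
    apply Finset.card_image_of_injOn
    intro z₁ h1 z₂ h2 he
    simp only [hH, Finset.mem_coe, Finset.mem_filter, Finset.mem_univ, true_and] at h1 h2
    exact aux_cube_inj hts h1.2 h2.2 he
  have heq : Hf.image (· ^ 3) = Hf := Finset.eq_of_subset_of_card_le hsub (le_of_eq hcard.symm)
  have hdH : d ∈ Hf := by simp [hH, hd, hdt]
  rw [← heq] at hdH
  simp only [Finset.mem_image] at hdH
  obtain ⟨z, hz, hz3⟩ := hdH
  simp only [hH, Finset.mem_filter, Finset.mem_univ, true_and] at hz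
  exact ⟨z, hz.1, hz.2, hz3⟩

-- count of m-th roots of a nonzero element having a root, given a primitive m-th root of unity
lemma aux_card_pow_eq {F : Type*} [Field F] [Fintype F] {m : ℕ} (hm : 0 < m) {ζ : F}
    (hζ : IsPrimitiveRoot ζ m) {c : F} (hc : c ≠ 0) (hex : ∃ x : F, x ^ m = c) :
    Nat.card {y : F // y ^ m = c} = m := by
  classical
  rw [Nat.card_eq_fintype_card, Fintype.card_subtype]
  have hfin : univ.filter (fun y : F => y ^ m = c) = (nthRoots m c).toFinset := by
    ext y; simp [mem_nthRoots hm]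
  rw [hfin, Multiset.toFinset_card_of_nodup (hζ.nthRoots_nodup hc), hζ.card_nthRoots, if_pos hex]

-- surjectivity of the m-power (norm-like) map onto the (t-1)-th roots of unity
lemma aux_exists_pow {F : Type*} [Field F] [Fintype F] {t m : ℕ} (ht : 1 < t)
    (hqm : Fintype.card F - 1 = m * (t - 1)) {d : F} (hd : d ≠ 0) (hdt : d ^ (t - 1) = 1) :
    ∃ x : F, x ≠ 0 ∧ x ^ m = d := by
  obtain ⟨g, hg⟩ := IsCyclic.exists_generator (α := Fˣ)
  have horder : orderOf g = Fintype.card F - 1 := by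
    rw [orderOf_eq_card_of_forall_mem_zpowers hg, Nat.card_units, Nat.card_eq_fintype_card]
  set u : Fˣ := Units.mk0 d hd with hu0
  have hu : u ^ (t - 1) = 1 := by
    ext
    simp [hu0, hdt]
  obtain ⟨k, hk⟩ := (mem_powers_iff_mem_zpowers).2 (hg u)
  simp only [] at hk
  have hk : g ^ k = u := hk
  have h1 : g ^ (k * (t - 1)) = 1 := by rw [pow_mul, hk, hu]
  have h2 : m * (t - 1) ∣ k * (t - 1) := by
    rw [← hqm, ← horder]; exact orderOf_dvd_of_pow_eq_one h1
  have h3 : m ∣ k := Nat.dvd_of_mul_dvd_mul_right (by omega) h2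
  obtain ⟨c, rfl⟩ := h3
  refine ⟨((g ^ c : Fˣ) : F), Units.ne_zero _, ?_⟩
  have : g ^ (m * c) = u := hk
  rw [← Units.val_pow_eq_pow_val, ← pow_mul, mul_comm c m, this]
  rfl


theorem stmt_11 {p h r : ℕ} (hp : p.Prime) (hp11 : 11 < p)
    (hr : 0 < r) (hrh : r ∣ h) (hrlt : r < h)
    {F : Type*} [Field F] [Fintype F] (hF : Fintype.card F = p ^ h)
    (n : ℕ) (hn : n = 3 * (p ^ h - 1) / (p ^ r - 1))
    (a b : F) (hab : a * b ≠ 0)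
    (ha : a ^ (p ^ r) = a) (hb : b ^ (p ^ r) = b)
    (hmod : p ^ r % 3 ≠ 1) :
    Nat.card {P : Projectivization F (Fin 3 → F) //
        a * (P.rep 0) ^ n + b * (P.rep 1) ^ n = (P.rep 2) ^ n} =
      n ^ 2 / 9 * (p ^ r - 2) + n := by
  classical
  set q := p ^ h with hq0
  set t := p ^ r with ht0
  -- numerics
  have hp2 : 2 ≤ p := hp.two_le
  have ht2 : 2 ≤ t := by
    have : 1 < p ^ r := Nat.one_lt_pow (by omega) (by omega)
    omega
  have htq : t < q := Nat.pow_lt_pow_right (by omega) hrlt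
  have hdvd : t - 1 ∣ q - 1 := by
    have hq' : q = t ^ (h / r) := by rw [ht0, hq0, ← pow_mul, Nat.mul_div_cancel' hrh]
    rw [hq']
    simpa using Nat.sub_dvd_pow_sub_pow t 1 (h / r)
  set m := (q - 1) / (t - 1) with hm0
  have hm : q - 1 = m * (t - 1) := (Nat.div_mul_cancel hdvd).symm
  have hn3 : n = 3 * m := by rw [hn, Nat.mul_div_assoc 3 hdvd]
  have hmpos : 0 < m := Nat.div_pos (by omega) (by omega)
  have hnpos : 0 < n := by omega
  have hmle : m ≤ q - 1 := Nat.div_le_self _ _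
  have ht3 : t % 3 = 2 := by
    have h3 : ¬ (3 ∣ t) := by
      intro h3
      have h3p : (3 : ℕ) ∣ p := Nat.Prime.dvd_of_dvd_pow Nat.prime_three h3
      rcases (Nat.Prime.eq_one_or_self_of_dvd hp 3 h3p) with h | h <;> omega
    rw [Nat.dvd_iff_mod_eq_zero] at h3
    omega
  obtain ⟨s, hts⟩ : ∃ s, t - 1 = 3 * s + 1 := ⟨(t - 1) / 3, by omega⟩
  have hq1 : 0 < q - 1 := by omega
  have ht12 : t - 1 = (t - 2) + 1 := by omega
  have hqm : Fintype.card F - 1 = m * (t - 1) := by rw [hF]; exact hm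
  -- characteristic
  have hchar : CharP F p := by
    obtain ⟨p', hp'⟩ := CharP.exists F
    haveI := hp'
    obtain ⟨k, hpk, hcard⟩ := FiniteField.card F p'
    have hpp' : p = p' := by
      have hdvd' : p ∣ p' ^ (k : ℕ) := by
        rw [← hcard, hF, hq0]
        exact dvd_pow_self p (by omega)
      exact (Nat.prime_dvd_prime_iff_eq hp hpk).1 (hp.dvd_of_dvd_pow hdvd')
    rwa [hpp']
  haveI := hchar
  haveI : Fact p.Prime := ⟨hp⟩
  -- basic field facts
  have ha0 : a ≠ 0 := fun h0 => hab (by rw [h0, zero_mul])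
  have hb0 : b ≠ 0 := fun h0 => hab (by rw [h0, mul_zero])
  have hpow1 : ∀ x : F, x ≠ 0 → x ^ (q - 1) = 1 := fun x hx => by
    rw [← hF]; exact FiniteField.pow_card_sub_one_eq_one x hx
  have hTform : ∀ c : F, c ≠ 0 → c ^ t = c → c ^ (t - 1) = 1 := by
    intro c hc hct
    have h1 : c ^ (t - 1) * c = 1 * c := by
      rw [← pow_succ, one_mul]
      convert hct using 2
      omega
    exact mul_right_cancel₀ hc h1
  have hTform' : ∀ c : F, c ^ (t - 1) = 1 → c ^ t = c := by
    intro c hct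
    have : c ^ t = c ^ (t - 1) * c := by rw [← pow_succ]; congr 1; omega
    rw [this, hct, one_mul]
  have ha' : a ^ (t - 1) = 1 := hTform a ha0 ha
  have hb' : b ^ (t - 1) = 1 := hTform b hb0 hb
  have hTn : ∀ x : F, x ≠ 0 → (x ^ n) ^ (t - 1) = 1 := by
    intro x hx
    rw [← pow_mul, show n * (t - 1) = (q - 1) * 3 by rw [hn3]; rw [hm]; ring, pow_mul,
      hpow1 x hx, one_pow]
  have hxnT : ∀ x : F, (x ^ n) ^ t = x ^ n := by
    intro x
    by_cases hx : x = 0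
    · rw [hx, zero_pow hnpos.ne', zero_pow (by omega)]
    · exact hTform' _ (hTn x hx)
  have haddT : ∀ u v : F, u ^ t = u → v ^ t = v → (u + v) ^ t = u + v := by
    intro u v hu hv
    rw [ht0, add_pow_char_pow, ← ht0, hu, hv]
  -- primitive m-th root of unity
  obtain ⟨ζ, hζ⟩ : ∃ ζ : F, IsPrimitiveRoot ζ m := by
    obtain ⟨g, hg⟩ := IsCyclic.exists_generator (α := Fˣ)
    have horder : orderOf g = q - 1 := by
      rw [orderOf_eq_card_of_forall_mem_zpowers hg, Nat.card_units, Nat.card_eq_fintype_card, hF]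
    refine ⟨((g ^ (t - 1) : Fˣ) : F), ?_⟩
    rw [IsPrimitiveRoot.coe_units_iff]
    have hgo : orderOf (g ^ (t - 1)) = m := by
      rw [orderOf_pow, horder, Nat.gcd_eq_right hdvd]
    exact hgo ▸ IsPrimitiveRoot.orderOf (g ^ (t - 1))
  -- root count function
  set Nc : F → ℕ := fun c => Nat.card {z : F // z ^ n = c} with hNc
  have hC0 : Nc 0 = 1 := by
    show Nat.card {z : F // z ^ n = 0} = 1
    have h01 : ∀ z : F, z ^ n = 0 ↔ z = 0 := fun z => pow_eq_zero_iff hnpos.ne'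
    rw [Nat.card_congr (Equiv.subtypeEquivRight h01), Nat.card_eq_fintype_card,
      Fintype.card_subtype_eq]
  have hEx : ∀ d : F, d ≠ 0 → d ^ (t - 1) = 1 → ∃ x : F, x ≠ 0 ∧ x ^ n = d := by
    intro d hd hdt
    obtain ⟨z, hz0, hzt, hz3⟩ := aux_cube_surj hts hd hdt
    obtain ⟨x, hx0, hxm⟩ := aux_exists_pow (by omega) hqm hz0 hzt
    exact ⟨x, hx0, by rw [hn3, mul_comm 3 m, pow_mul, hxm, hz3]⟩
  have hCT : ∀ c : F, c ≠ 0 → c ^ (t - 1) = 1 → Nc c = m := by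
    intro c hc hct
    obtain ⟨x, hx0, hxn⟩ := hEx c hc hct
    have hzm : (x ^ m) ^ 3 = c := by rw [← pow_mul, mul_comm m 3, ← hn3, hxn]
    have hiff : ∀ y : F, y ^ n = c ↔ y ^ m = x ^ m := by
      intro y
      constructor
      · intro hy
        have hy0 : y ≠ 0 := by
          rintro rfl; rw [zero_pow hnpos.ne'] at hy; exact hc hy.symm
        refine aux_cube_inj hts ?_ ?_ ?_
        · rw [← pow_mul, ← hm]; exact hpow1 y hy0
        · rw [← pow_mul, ← hm]; exact hpow1 x hx0
        · rw [← pow_mul, mul_comm m 3, ← hn3, hy]; exact hzm.symm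
      · intro hy; rw [hn3, mul_comm 3 m, pow_mul, hy, hzm]
    show Nat.card {z : F // z ^ n = c} = m
    rw [Nat.card_congr (Equiv.subtypeEquivRight hiff)]
    exact aux_card_pow_eq hmpos hζ (pow_ne_zero m hx0) ⟨x, rfl⟩
  -- inner sums
  have hsum0 : ∑ y : F, Nc (b * y ^ n) = 1 + (q - 1) * m := by
    rw [← Finset.sum_erase_add Finset.univ _ (Finset.mem_univ (0 : F))]
    have h0 : Nc (b * (0 : F) ^ n) = 1 := by rw [zero_pow hnpos.ne', mul_zero, hC0]
    have hrest : ∀ y ∈ Finset.univ.erase (0 : F), Nc (b * y ^ n) = m := by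
      intro y hy
      have hy0 : y ≠ 0 := Finset.ne_of_mem_erase hy
      exact hCT _ (mul_ne_zero hb0 (pow_ne_zero _ hy0))
        (by rw [mul_pow, hb', one_mul]; exact hTn y hy0)
    rw [Finset.sum_congr rfl hrest, Finset.sum_const, h0,
      Finset.card_erase_of_mem (Finset.mem_univ _), Finset.card_univ, hF, smul_eq_mul]
    exact Nat.add_comm _ _
  have hsumc : ∀ c : F, c ≠ 0 → c ^ (t - 1) = 1 →
      ∑ y : F, Nc (c + b * y ^ n) = 2 * m + ((q - 1) - m) * m := by
    intro c hc hct
    have hcT : c ^ t = c := hTform' c hct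
    set d : F := -(c * b⁻¹) with hd0
    have hd : d ≠ 0 := by
      rw [hd0]
      simp only [ne_eq, neg_eq_zero, mul_eq_zero, inv_eq_zero, not_or]
      exact ⟨hc, hb0⟩
    have hdt : d ^ (t - 1) = 1 := by
      have hoddp : Odd p := hp.odd_of_ne_two (by omega)
      have hoddt : Odd t := hoddp.pow
      have heven : Even (t - 1) := Nat.Odd.sub_odd hoddt odd_one
      rw [hd0, heven.neg_pow, mul_pow, hct, inv_pow, hb', inv_one, one_mul]
    rw [← Finset.sum_erase_add Finset.univ _ (Finset.mem_univ (0 : F))]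
    have h0 : Nc (c + b * (0 : F) ^ n) = m := by
      rw [zero_pow hnpos.ne', mul_zero, add_zero]; exact hCT c hc hct
    rw [h0, ← Finset.sum_filter_add_sum_filter_not (Finset.univ.erase (0 : F))
      (fun y => c + b * y ^ n = 0)]
    have h1 : ∀ y ∈ (Finset.univ.erase (0 : F)).filter (fun y => c + b * y ^ n = 0),
        Nc (c + b * y ^ n) = 1 := by
      intro y hy; rw [(Finset.mem_filter.1 hy).2, hC0]
    have h2 : ∀ y ∈ (Finset.univ.erase (0 : F)).filter (fun y => ¬ c + b * y ^ n = 0),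
        Nc (c + b * y ^ n) = m := by
      intro y hy
      rw [Finset.mem_filter] at hy
      refine hCT _ hy.2 (hTform _ hy.2 ?_)
      exact haddT _ _ hcT (by rw [mul_pow, hb, hxnT])
    have hfil : (Finset.univ.erase (0 : F)).filter (fun y => c + b * y ^ n = 0) =
        Finset.univ.filter (fun y : F => y ^ n = d) := by
      ext y
      simp only [Finset.mem_filter, Finset.mem_erase, Finset.mem_univ, true_and, and_true]
      constructor
      · rintro ⟨hy0, hy⟩
        have hxx := eq_neg_of_add_eq_zero_left hy
        rw [hd0]
        field_simp
        linear_combination hxx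
      · intro hy
        constructor
        · rintro rfl; rw [zero_pow hnpos.ne'] at hy; exact hd hy.symm
        · rw [hy, hd0]; field_simp; ring
    have hcard1 : ((Finset.univ.erase (0 : F)).filter (fun y => c + b * y ^ n = 0)).card = m := by
      rw [hfil, ← Fintype.card_subtype, ← Nat.card_eq_fintype_card]
      exact hCT d hd hdt
    have hcards : ((Finset.univ.erase (0 : F)).filter (fun y => ¬ c + b * y ^ n = 0)).card
        = (q - 1) - m := by
      have htot := Finset.card_filter_add_card_filter_not
        (s := Finset.univ.erase (0 : F)) (p := fun y : F => c + b * y ^ n = 0)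
      rw [Finset.card_erase_of_mem (Finset.mem_univ _), Finset.card_univ, hF, hcard1] at htot
      omega
    rw [Finset.sum_congr rfl h1, Finset.sum_congr rfl h2, Finset.sum_const, Finset.sum_const,
      hcard1, hcards, smul_eq_mul, smul_eq_mul, mul_one]
    ring
  -- outer sum
  have houter : ∑ x : F, ∑ y : F, Nc (a * x ^ n + b * y ^ n) =
      (1 + (q - 1) * m) + (q - 1) * (2 * m + ((q - 1) - m) * m) := by
    rw [← Finset.sum_erase_add Finset.univ _ (Finset.mem_univ (0 : F))]
    have h0 : ∑ y : F, Nc (a * (0 : F) ^ n + b * y ^ n) = 1 + (q - 1) * m := by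
      simp only [zero_pow hnpos.ne', mul_zero, zero_add]
      exact hsum0
    have hrest : ∀ x ∈ Finset.univ.erase (0 : F),
        ∑ y : F, Nc (a * x ^ n + b * y ^ n) = 2 * m + ((q - 1) - m) * m := by
      intro x hx
      have hx0 : x ≠ 0 := Finset.ne_of_mem_erase hx
      exact hsumc _ (mul_ne_zero ha0 (pow_ne_zero _ hx0))
        (by rw [mul_pow, ha', one_mul]; exact hTn x hx0)
    rw [Finset.sum_congr rfl hrest, Finset.sum_const, h0,
      Finset.card_erase_of_mem (Finset.mem_univ _), Finset.card_univ, hF, smul_eq_mul]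
    exact Nat.add_comm _ _
  -- sigma decomposition
  have htotal : Nat.card {w : F × F × F // a * w.1 ^ n + b * w.2.1 ^ n = w.2.2 ^ n} =
      ∑ x : F, ∑ y : F, Nc (a * x ^ n + b * y ^ n) := by
    have e : {w : F × F × F // a * w.1 ^ n + b * w.2.1 ^ n = w.2.2 ^ n} ≃
        (Σ xy : F × F, {z : F // z ^ n = a * xy.1 ^ n + b * xy.2 ^ n}) :=
      { toFun := fun w => ⟨(w.1.1, w.1.2.1), ⟨w.1.2.2, w.2.symm⟩⟩
        invFun := fun s => ⟨(s.1.1, s.1.2, s.2.1), s.2.2.symm⟩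
        left_inv := fun w => rfl
        right_inv := fun s => rfl }
    rw [Nat.card_congr e, Nat.card_eq_fintype_card, Fintype.card_sigma, Fintype.sum_prod_type]
    refine Finset.sum_congr rfl fun x _ => Finset.sum_congr rfl fun y _ => ?_
    exact (Nat.card_eq_fintype_card).symm
  -- removing zero
  have hins : Nat.card {w : F × F × F // w ≠ 0 ∧ a * w.1 ^ n + b * w.2.1 ^ n = w.2.2 ^ n} + 1 =
      Nat.card {w : F × F × F // a * w.1 ^ n + b * w.2.1 ^ n = w.2.2 ^ n} := by
    rw [Nat.card_eq_fintype_card, Nat.card_eq_fintype_card, Fintype.card_subtype,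
      Fintype.card_subtype]
    have hz : (0 : F × F × F) ∈ Finset.univ.filter (fun w : F × F × F =>
        a * w.1 ^ n + b * w.2.1 ^ n = w.2.2 ^ n) := by
      simp [zero_pow hnpos.ne']
    have hfe : Finset.univ.filter (fun w : F × F × F =>
          w ≠ 0 ∧ a * w.1 ^ n + b * w.2.1 ^ n = w.2.2 ^ n)
        = (Finset.univ.filter (fun w : F × F × F =>
          a * w.1 ^ n + b * w.2.1 ^ n = w.2.2 ^ n)).erase 0 := by
      ext w
      simp only [Finset.mem_filter, Finset.mem_erase, Finset.mem_univ, true_and, and_comm]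
    rw [hfe, Finset.card_erase_add_one hz]
  -- vector/triple equivalence
  have hAB : Nat.card {v : Fin 3 → F // v ≠ 0 ∧ a * (v 0) ^ n + b * (v 1) ^ n = (v 2) ^ n} =
      Nat.card {w : F × F × F // w ≠ 0 ∧ a * w.1 ^ n + b * w.2.1 ^ n = w.2.2 ^ n} := by
    let e3 : (Fin 3 → F) ≃ F × F × F :=
      { toFun := fun v => (v 0, v 1, v 2)
        invFun := fun w => ![w.1, w.2.1, w.2.2]
        left_inv := by intro v; funext i; fin_cases i <;> rfl
        right_inv := fun w => rfl }
    refine Nat.card_congr (Equiv.subtypeEquiv e3 fun v => ?_)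
    have hv3 : v = 0 ↔ (v 0 = 0 ∧ v 1 = 0 ∧ v 2 = 0) := by
      constructor
      · rintro rfl; simp
      · rintro ⟨h0, h1, h2⟩; funext i; fin_cases i <;> assumption
    constructor
    · rintro ⟨hv0, hq⟩
      refine ⟨?_, hq⟩
      intro hzero
      apply hv0
      rw [hv3]
      have h1 : (v 0, v 1, v 2) = ((0 : F), (0 : F), (0 : F)) := hzero
      rw [Prod.ext_iff] at h1
      obtain ⟨ha1, h1⟩ := h1
      rw [Prod.ext_iff] at h1
      exact ⟨ha1, h1.1, h1.2⟩
    · rintro ⟨hw0, hq⟩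
      refine ⟨?_, hq⟩
      rintro rfl
      exact hw0 rfl
  -- projectivization
  have hproj : (q - 1) * Nat.card {P : Projectivization F (Fin 3 → F) //
        a * (P.rep 0) ^ n + b * (P.rep 1) ^ n = (P.rep 2) ^ n} =
      Nat.card {v : Fin 3 → F // v ≠ 0 ∧ a * (v 0) ^ n + b * (v 1) ^ n = (v 2) ^ n} := by
    have hsmul : ∀ (u : Fˣ) (v : Fin 3 → F) (i : Fin 3), (u • v) i = (u : F) * v i := by
      intro u v i
      simp [Pi.smul_apply, Units.smul_def, smul_eq_mul]
    have hcond : ∀ (u : Fˣ) (v : Fin 3 → F),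
        (a * (v 0) ^ n + b * (v 1) ^ n = (v 2) ^ n) →
        a * ((u • v) 0) ^ n + b * ((u • v) 1) ^ n = ((u • v) 2) ^ n := by
      intro u v hv
      rw [hsmul, hsmul, hsmul, mul_pow, mul_pow, mul_pow]
      linear_combination ((u : F)) ^ n * hv
    have hnz : ∀ (u : Fˣ) (v : Fin 3 → F), v ≠ 0 → u • v ≠ 0 := by
      intro u v hv hz
      apply hv
      have h1 := congrArg (fun w => u⁻¹ • w) hz
      simpa [inv_smul_smul] using h1
    set S := {P : Projectivization F (Fin 3 → F) //
        a * (P.rep 0) ^ n + b * (P.rep 1) ^ n = (P.rep 2) ^ n} with hSdef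
    let Φ : Fˣ × S → {v : Fin 3 → F // v ≠ 0 ∧ a * (v 0) ^ n + b * (v 1) ^ n = (v 2) ^ n} :=
      fun x => ⟨x.1 • x.2.1.rep, hnz _ _ x.2.1.rep_nonzero, hcond _ _ x.2.2⟩
    have hbij : Function.Bijective Φ := by
      constructor
      · rintro ⟨u, P, hP⟩ ⟨u', P', hP'⟩ hEq
        simp only [Φ, Subtype.mk.injEq] at hEq
        have hPP : P = P' := by
          have h1 : Projectivization.mk F P.rep P.rep_nonzero =
              Projectivization.mk F P'.rep P'.rep_nonzero := by
            rw [Projectivization.mk_eq_mk_iff]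
            exact ⟨u⁻¹ * u', by rw [mul_smul, ← hEq, inv_smul_smul]⟩
          rwa [Projectivization.mk_rep, Projectivization.mk_rep] at h1
        subst hPP
        obtain ⟨i, hi⟩ : ∃ i, P.rep i ≠ 0 := Function.ne_iff.1 P.rep_nonzero
        have h2 : (u : F) * P.rep i = (u' : F) * P.rep i := by
          have h3 := congrFun hEq i
          rw [hsmul, hsmul] at h3
          exact h3
        have hu : u = u' := Units.ext (mul_right_cancel₀ hi h2)
        subst hu
        rfl
      · rintro ⟨v, hv0, hvq⟩
        obtain ⟨u, hu⟩ := Projectivization.exists_smul_eq_mk_rep F v hv0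
        have hPq : a * ((Projectivization.mk F v hv0).rep 0) ^ n +
            b * ((Projectivization.mk F v hv0).rep 1) ^ n =
            ((Projectivization.mk F v hv0).rep 2) ^ n := by
          rw [← hu]; exact hcond u v hvq
        refine ⟨(u⁻¹, ⟨Projectivization.mk F v hv0, hPq⟩), ?_⟩
        apply Subtype.ext
        show u⁻¹ • (Projectivization.mk F v hv0).rep = v
        rw [← hu, inv_smul_smul]
    have hcardeq := Nat.card_congr (Equiv.ofBijective Φ hbij)
    rw [Nat.card_prod] at hcardeq
    rw [← hcardeq, Nat.card_units, Nat.card_eq_fintype_card (α := F), hF]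
  -- final arithmetic
  have hfinal : (q - 1) * Nat.card {P : Projectivization F (Fin 3 → F) //
        a * (P.rep 0) ^ n + b * (P.rep 1) ^ n = (P.rep 2) ^ n} + 1 =
      (1 + (q - 1) * m) + (q - 1) * (2 * m + ((q - 1) - m) * m) := by
    rw [hproj, hAB, hins, htotal, houter]
  have hsub : (q - 1) - m = m * (t - 2) := by
    rw [hm]
    rw [ht12, Nat.mul_succ, Nat.add_sub_cancel]
  rw [hsub] at hfinal
  have harr : 1 + (q - 1) * m + (q - 1) * (2 * m + m * (t - 2) * m) =
      (q - 1) * (3 * m + m * (t - 2) * m) + 1 := by ring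
  rw [harr] at hfinal
  have hcard : Nat.card {P : Projectivization F (Fin 3 → F) //
        a * (P.rep 0) ^ n + b * (P.rep 1) ^ n = (P.rep 2) ^ n} = 3 * m + m * (t - 2) * m :=
    Nat.eq_of_mul_eq_mul_left hq1 (Nat.add_right_cancel hfinal)
  rw [hcard]
  have hn2 : n ^ 2 / 9 = m ^ 2 := by
    rw [hn3, show (3 * m) ^ 2 = 9 * m ^ 2 by ring, Nat.mul_div_cancel_left _ (by norm_num)]
  rw [hn2, hn3]
  ring
end

section
/- Let K be an algebraically closed field and a, b ∈ K with ab ≠ 0. Then the affine polynomial a X³ + b Y³ - 1 is irreducible in K[X,Y], provided the characteristic of K is not 3. -/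
open MvPolynomial

noncomputable def ee19 (K : Type*) [Field K] : MvPolynomial (Fin 1) K ≃ₐ[K] Polynomial K :=
  (renameEquiv K ((Equiv.equivPUnit (Fin 1)) : Fin 1 ≃ PUnit.{1})).trans (pUnitAlgEquiv K)

noncomputable def EE19 (K : Type*) [Field K] :
    MvPolynomial (Fin 2) K ≃ₐ[K] Polynomial (Polynomial K) :=
  (MvPolynomial.finSuccEquiv K 1).trans (Polynomial.mapAlgEquiv (ee19 K))

theorem EE19_apply (K : Type*) [Field K] (a b : K) :
    EE19 K (MvPolynomial.C a * MvPolynomial.X 0 ^ 3 + MvPolynomial.C b * MvPolynomial.X 1 ^ 3 - 1) =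
      Polynomial.C (Polynomial.C a) * Polynomial.X ^ 3 +
        Polynomial.C (Polynomial.C b * Polynomial.X ^ 3 - 1) := by
  have hee : ee19 K (MvPolynomial.X 0) = Polynomial.X := by
    simp [ee19, pUnitAlgEquiv]
  have h1 : EE19 K (MvPolynomial.X 1) = Polynomial.C Polynomial.X := by
    rw [show (1 : Fin 2) = (0 : Fin 1).succ from rfl]
    rw [EE19, AlgEquiv.trans_apply, finSuccEquiv_X_succ, Polynomial.coe_mapAlgEquiv,
      Polynomial.map_C]
    simp [hee]
  have h0 : EE19 K (MvPolynomial.X 0) = Polynomial.X := by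
    rw [EE19, AlgEquiv.trans_apply, finSuccEquiv_X_zero, Polynomial.coe_mapAlgEquiv,
      Polynomial.map_X]
  have hC : ∀ c : K, EE19 K (MvPolynomial.C c) = Polynomial.C (Polynomial.C c) := by
    intro c
    rw [EE19, AlgEquiv.trans_apply, finSuccEquiv_apply, eval₂Hom_C, Polynomial.coe_mapAlgEquiv]
    simp [ee19]
  have hone : EE19 K 1 = 1 := map_one _
  rw [map_sub, map_add, map_mul, map_mul, map_pow, map_pow, h0, h1, hC, hC, hone]
  simp only [map_sub, map_mul, map_pow, map_one]
  ring

theorem no_cube_poly19 {K : Type*} [Field K] (h3 : (3 : K) ≠ 0) {a b : K} (ha : a ≠ 0)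
    (hb : b ≠ 0) (s : Polynomial K) :
    s ^ 3 ≠ Polynomial.C a⁻¹ - Polynomial.C (a⁻¹ * b) * Polynomial.X ^ 3 := by
  intro hs
  set u : Polynomial K := Polynomial.C a⁻¹ - Polynomial.C (a⁻¹ * b) * Polynomial.X ^ 3 with hu
  have hder : u.derivative = -(Polynomial.C (a⁻¹ * b * 3) * Polynomial.X ^ 2) := by
    simp [hu]; simp only [map_ofNat]; ring
  have hcop : IsCoprime u u.derivative := by
    refine ⟨Polynomial.C a, -(Polynomial.C (a * 3⁻¹) * Polynomial.X), ?_⟩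
    rw [hder, hu]
    calc Polynomial.C a * (Polynomial.C a⁻¹ - Polynomial.C (a⁻¹ * b) * Polynomial.X ^ 3) +
        -(Polynomial.C (a * 3⁻¹) * Polynomial.X) *
          -(Polynomial.C (a⁻¹ * b * 3) * Polynomial.X ^ 2)
        = Polynomial.C (a * a⁻¹) +
            Polynomial.C (a * 3⁻¹ * (a⁻¹ * b * 3) - a * (a⁻¹ * b)) * Polynomial.X ^ 3 := by
          simp only [Polynomial.C_sub, Polynomial.C_mul]; ring
      _ = 1 := by
          rw [mul_inv_cancel₀ ha,
            show a * 3⁻¹ * (a⁻¹ * b * 3) - a * (a⁻¹ * b) = 0 by field_simp; ring,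
            Polynomial.C_0, Polynomial.C_1]
          ring
  have hsep : u.Separable := hcop
  have hsq : Squarefree u := hsep.squarefree
  have hus : IsUnit s := hsq s (by rw [← hs]; exact ⟨s, by ring⟩)
  have huu : IsUnit u := by rw [← hs]; exact hus.pow 3
  obtain ⟨r, hr, hru⟩ := Polynomial.isUnit_iff.mp huu
  have h1 : (Polynomial.C r).coeff 3 = 0 := by simp [Polynomial.coeff_C]
  have h2 : u.coeff 3 = -(a⁻¹ * b) := by
    rw [hu, Polynomial.coeff_sub, Polynomial.coeff_C_mul, Polynomial.coeff_X_pow]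
    simp [Polynomial.coeff_C]
  rw [hru, h2] at h1
  simp [inv_ne_zero ha, hb] at h1

theorem stmt_19 {K : Type*} [Field K] [IsAlgClosed K] (hchar : ringChar K ≠ 3)
    (a b : K) (hab : a * b ≠ 0) :
    Irreducible (C a * X 0 ^ 3 + C b * X 1 ^ 3 - 1 : MvPolynomial (Fin 2) K) := by
  classical
  have ha : a ≠ 0 := left_ne_zero_of_mul hab
  have hb : b ≠ 0 := right_ne_zero_of_mul hab
  have h3 : (3 : K) ≠ 0 := by
    intro h
    have h3' : ((3 : ℕ) : K) = 0 := by exact_mod_cast h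
    have hdvd := ringChar.dvd h3'
    rcases (Nat.prime_three).eq_one_or_self_of_dvd _ hdvd with h1 | h1
    · exact CharP.ringChar_ne_one h1
    · exact hchar h1
  rw [← MulEquiv.irreducible_iff (EE19 K), EE19_apply]
  set F := FractionRing (Polynomial K)
  set φ := algebraMap (Polynomial K) F with hφ
  have hinj : Function.Injective φ := IsFractionRing.injective (Polynomial K) F
  set Q : Polynomial (Polynomial K) :=
    Polynomial.C (Polynomial.C a) * Polynomial.X ^ 3 +
      Polynomial.C (Polynomial.C b * Polynomial.X ^ 3 - 1) with hQ
  have hQprim : Q.IsPrimitive := by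
    intro r hr
    have hco : Q.coeff 3 = Polynomial.C a := by
      rw [hQ, Polynomial.coeff_add, Polynomial.coeff_C_mul, Polynomial.coeff_X_pow,
        Polynomial.coeff_C]
      simp
    have hdvd := (Polynomial.C_dvd_iff_dvd_coeff r Q).mp hr 3
    rw [hco] at hdvd
    exact isUnit_of_dvd_unit hdvd (Polynomial.isUnit_C.mpr (isUnit_iff_ne_zero.mpr ha))
  rw [hQprim.irreducible_iff_irreducible_map_fraction_map (K := F)]
  set A : F := φ (Polynomial.C a) with hA
  have hAne : A ≠ 0 := by
    rw [hA]
    exact fun h => ha (Polynomial.C_eq_zero.mp (hinj (by simpa using h)))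
  set u : Polynomial K := Polynomial.C a⁻¹ - Polynomial.C (a⁻¹ * b) * Polynomial.X ^ 3 with hu
  set t : F := φ u with ht
  have hAt : A * t = φ (1 - Polynomial.C b * Polynomial.X ^ 3) := by
    rw [hA, ht, ← map_mul]
    congr 1
    rw [hu, mul_sub, ← Polynomial.C_mul, mul_inv_cancel₀ ha, ← mul_assoc, ← Polynomial.C_mul,
      show a * (a⁻¹ * b) = b by field_simp, Polynomial.C_1]
  have hmap : Q.map φ = (Polynomial.X ^ 3 - Polynomial.C t) * Polynomial.C A := by
    rw [hQ, Polynomial.map_add, Polynomial.map_mul, Polynomial.map_pow, Polynomial.map_C,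
      Polynomial.map_C, Polynomial.map_X, sub_mul, ← Polynomial.C_mul, mul_comm t A, hAt,
      show (1 - Polynomial.C b * Polynomial.X ^ 3 : Polynomial K)
        = -(Polynomial.C b * Polynomial.X ^ 3 - 1) by ring, map_neg, Polynomial.C_neg]
    ring
  have hirr : Irreducible (Polynomial.X ^ 3 - Polynomial.C t : Polynomial F) := by
    refine X_pow_sub_C_irreducible_of_prime Nat.prime_three fun r hr => ?_
    have hint : ∃ s : Polynomial K, φ s = r := by
      refine IsIntegrallyClosed.exists_algebraMap_eq_of_isIntegral_pow (n := 3) (by norm_num) ?_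
      rw [hr, ht]
      exact isIntegral_algebraMap
    obtain ⟨s, hsr⟩ := hint
    have : φ (s ^ 3) = φ u := by rw [map_pow, hsr, hr, ht]
    exact no_cube_poly19 h3 ha hb s (hinj this)
  rw [hmap]
  exact ((associated_mul_unit_left _ _
    (Polynomial.isUnit_C.mpr (isUnit_iff_ne_zero.mpr hAne))).symm).irreducible hirr
end
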